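/- arXiv:1409.8523 — 2 statements merged into one kernel-verified Lean document; each statement's English description precedes it below -/
import Mathlib

section
/- Let a ∈ Adj(G,E) and b ∈ Adj(G,F) with Null(a) ⊆ Null(b) and Null(a*) = {0}. Define the operator t : E → F by D(t) = Range(a) and t(ax) := bx for x ∈ G. If t is closed (its graph is closed in E ⊕ F with respect to the norm), then t is graph regular and t* = (a*)^{-1} ∘ b*. -/
open scoped RightActions Pointwise

noncomputable section

namespace CStarReg

variable (A : Type*)

/-- The orthogonal complement of a subset of a Hilbert C*-module with respect to the
`A`-valued inner product. -/
def ortho {E : Type*} [Zero A] [Inner A E] (S : Set E) : Set E :=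
  {x | ∀ y ∈ S, (inner A x y : A) = 0}

/-- A subset of a Hilbert C*-module is *essential* if its orthogonal complement is trivial. -/
def IsEssential {E : Type*} [Zero A] [Zero E] [Inner A E] (S : Set E) : Prop :=
  ortho A S = {0}

/-- A subset is *orthogonally closed* if it coincides with its double orthogonal complement. -/
def IsOrthoClosedSet {E : Type*} [Zero A] [Inner A E] (S : Set E) : Prop :=
  ortho A (ortho A S) = S

/-- The `A`-valued inner product on the direct sum `E ⊕ F` of two Hilbert C*-modules. -/
instance prodInner {E F : Type*} [Add A] [Inner A E] [Inner A F] : Inner A (E × F) :=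
  ⟨fun p q => (inner A p.1 q.1 : A) + (inner A p.2 q.2 : A)⟩

/-- A (not necessarily densely or essentially defined) `ℂ`-linear and `A`-linear operator
from `E` to `F`, encoded by its graph. -/
structure Unbounded (E F : Type*) [AddCommGroup E] [AddCommGroup F]
    [Module ℂ E] [Module ℂ F] [SMul Aᵐᵒᵖ E] [SMul Aᵐᵒᵖ F] where
  graph : Set (E × F)
  zero_mem : ((0 : E), (0 : F)) ∈ graph
  add_mem : ∀ ⦃p q : E × F⦄, p ∈ graph → q ∈ graph → p + q ∈ graph
  smul_mem : ∀ (c : ℂ) ⦃p : E × F⦄, p ∈ graph → c • p ∈ graph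
  smulA_mem : ∀ (a : A) ⦃p : E × F⦄, p ∈ graph → (p.1 <• a, p.2 <• a) ∈ graph
  single_valued : ∀ ⦃y : F⦄, ((0 : E), y) ∈ graph → y = 0

/-- An adjointable (everywhere defined, with everywhere defined adjoint) operator between
Hilbert C*-modules. -/
structure Adjointable (E F : Type*) [Inner A E] [Inner A F] where
  toFun : E → F
  adjFun : F → E
  adjoint_eq : ∀ (x : E) (y : F), (inner A (toFun x) y : A) = inner A x (adjFun y)

section Operators

variable {A}
variable {E F G H : Type*} [AddCommGroup E] [AddCommGroup F] [AddCommGroup G] [AddCommGroup H]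
  [Module ℂ E] [Module ℂ F] [Module ℂ G] [Module ℂ H]
  [SMul Aᵐᵒᵖ E] [SMul Aᵐᵒᵖ F] [SMul Aᵐᵒᵖ G] [SMul Aᵐᵒᵖ H]

namespace Unbounded

/-- The domain of an operator. -/
def dom (t : Unbounded A E F) : Set E := Prod.fst '' t.graph

/-- The range of an operator. -/
def ran (t : Unbounded A E F) : Set F := Prod.snd '' t.graph

/-- The null space of an operator. -/
def ker (t : Unbounded A E F) : Set E := {x | (x, (0 : F)) ∈ t.graph}

/-- `t ⊆ s`, i.e. `s` extends `t`. -/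
def le (t s : Unbounded A E F) : Prop := t.graph ⊆ s.graph

end Unbounded

variable (A)

section WithInner

variable [Inner A E] [Inner A F] [Inner A G] [Inner A H] [Add A]

/-- The graph of the adjoint: `(y, z)` belongs to `adjSet A g` iff
`⟪t x, y⟫ = ⟪x, z⟫` for all `(x, t x) ∈ g`. -/
def adjSet (g : Set (E × F)) : Set (F × E) :=
  {q | ∀ p ∈ g, (inner A p.2 q.1 : A) = inner A p.1 q.2}

end WithInner

/-- Composition of graphs. -/
def compSet (g₂ : Set (F × G)) (g₁ : Set (E × F)) : Set (E × G) :=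
  {p | ∃ y, (p.1, y) ∈ g₁ ∧ (y, p.2) ∈ g₂}

/-- The graph of `1 + s` where `g` is the graph of `s`. -/
def oneAddSet (g : Set (E × E)) : Set (E × E) :=
  {p | ∃ y, (p.1, y) ∈ g ∧ p.2 = p.1 + y}

variable {A}

namespace Unbounded

variable [Inner A E] [Inner A F] [Add A] [Zero A]

/-- The graph of the adjoint operator `t*`. -/
def adjGraph (t : Unbounded A E F) : Set (F × E) := adjSet A t.graph

/-- The domain of the adjoint operator `t*`. -/
def adjDom (t : Unbounded A E F) : Set F := Prod.fst '' (adjSet A t.graph)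

/-- `s` is the adjoint of `t`. -/
def IsAdjointOf (s : Unbounded A F E) (t : Unbounded A E F) : Prop :=
  s.graph = adjSet A t.graph

/-- `t` is essentially defined, i.e. its domain has trivial orthogonal complement. -/
def EssentiallyDefined (t : Unbounded A E F) : Prop := IsEssential A t.dom

/-- `t` is orthogonally closed, i.e. its graph coincides with its double orthogonal
complement in `E ⊕ F`. -/
def OrthoClosed (t : Unbounded A E F) : Prop := ortho A (ortho A t.graph) = t.graph

/-- `t` is graph regular: essentially defined, orthogonally closed, and its graph is
orthogonally complemented in `E ⊕ F`. -/
def GraphRegular (t : Unbounded A E F) : Prop :=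
  t.EssentiallyDefined ∧ t.OrthoClosed ∧ t.graph + ortho A t.graph = Set.univ

/-- The graph of `t* t`. -/
def adjCompGraph (t : Unbounded A E F) : Set (E × E) := compSet (adjSet A t.graph) t.graph

/-- The graph of `t t*`. -/
def compAdjGraph (t : Unbounded A E F) : Set (F × F) := compSet t.graph (adjSet A t.graph)

/-- `a = (1 + t* t)⁻¹` as an everywhere defined map. -/
def IsAt (t : Unbounded A E F) (a : E → E) : Prop :=
  ∀ x : E, (a x, x) ∈ oneAddSet t.adjCompGraph

/-- `a⋆ = (1 + t t*)⁻¹` as an everywhere defined map. -/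
def IsAtStar (t : Unbounded A E F) (a : F → F) : Prop :=
  ∀ y : F, (a y, y) ∈ oneAddSet t.compAdjGraph

/-- `b = t ∘ a` as an everywhere defined map (where `a = (1 + t* t)⁻¹`, this is `b_t`). -/
def IsBt (t : Unbounded A E F) (a : E → E) (b : E → F) : Prop :=
  ∀ x : E, (a x, b x) ∈ t.graph

end Unbounded

namespace Adjointable

variable [Inner A E] [Inner A F]

/-- Self-adjointness of an adjointable operator. -/
def IsSelfAdj (a : Adjointable A E E) : Prop := a.adjFun = a.toFun

/-- Positivity of an adjointable operator: `⟪x, a x⟫ ≥ 0` for all `x`. -/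
def Nonneg [LE A] [Zero A] (a : Adjointable A E E) : Prop :=
  ∀ x : E, (0 : A) ≤ inner A x (a.toFun x)

/-- `r` is the positive square root of `a` in the C*-algebra `Adj(E)`. -/
def IsPosSqrtOf [LE A] [Zero A] (r a : Adjointable A E E) : Prop :=
  r.Nonneg ∧ r.adjFun = r.toFun ∧ ∀ x : E, r.toFun (r.toFun x) = a.toFun x

/-- The kernel of an adjointable operator is trivial. -/
def KerTrivial (a : Adjointable A E F) : Prop := ∀ x : E, a.toFun x = 0 → x = 0

end Adjointable

variable (A)

/-- The graph of the projection onto a submodule `G` (with domain `G ⊕ G^⊥`). -/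
def projSet [Zero A] [Inner A E] (G : Set E) : Set (E × E) :=
  {p | ∃ x ∈ G, ∃ y ∈ ortho A G, p = (x + y, x)}

/-- The restriction of a graph to those points whose first component lies in `D`. -/
def restrictSet (g : Set (E × F)) (D : Set E) : Set (E × F) := {p ∈ g | p.1 ∈ D}

end Operators

end CStarReg

namespace CStarReg

/-- The Hilbert C*-module structure with a right `A`-action, as `CStarModule` was defined in
Mathlib of December 2024 (the current `CStarModule` uses a left action). -/
class CStarModuleRight (A E : Type*) [NonUnitalSemiring A] [StarRing A] [Module ℂ A]
    [AddCommGroup E] [Module ℂ E] [PartialOrder A] [SMul Aᵐᵒᵖ E] [Norm A] [Norm E]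
    extends Inner A E where
  inner_add_right {x} {y} {z} : inner x (y + z) = inner x y + inner x z
  inner_self_nonneg {x} : 0 ≤ inner x x
  inner_self {x} : inner x x = 0 ↔ x = 0
  inner_op_smul_right {a : A} {x y : E} : inner x (y <• a) = inner x y * a
  inner_smul_right_complex {z : ℂ} {x} {y} : inner x (z • y) = z • inner x y
  star_inner x y : star (inner x y) = inner y x
  norm_eq_sqrt_norm_inner_self x : ‖x‖ = Real.sqrt ‖inner x x‖

end CStarReg

section Statements

open CStarReg Unbounded

variable {A : Type*} [NonUnitalCStarAlgebra A] [PartialOrder A] [StarOrderedRing A]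
variable {E : Type*} [NormedAddCommGroup E] [Module ℂ E] [SMul Aᵐᵒᵖ E] [CStarModuleRight A E]
  [CompleteSpace E]
variable {F : Type*} [NormedAddCommGroup F] [Module ℂ F] [SMul Aᵐᵒᵖ F] [CStarModuleRight A F]
  [CompleteSpace F]
variable {G : Type*} [NormedAddCommGroup G] [Module ℂ G] [SMul Aᵐᵒᵖ G] [CStarModuleRight A G]
  [CompleteSpace G]
variable {H : Type*} [NormedAddCommGroup H] [Module ℂ H] [SMul Aᵐᵒᵖ H] [CStarModuleRight A H]
  [CompleteSpace H]


open scoped InnerProductSpace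

section ModuleBasics

variable {A : Type*} [NonUnitalCStarAlgebra A] [PartialOrder A] [StarOrderedRing A]
variable {E : Type*} [NormedAddCommGroup E] [Module ℂ E] [SMul A E] [CStarModule A E]
variable {F : Type*} [NormedAddCommGroup F] [Module ℂ F] [SMul A F] [CStarModule A F]


lemma CStarReg.eq_zero_of_inner_right (x : E) (h : ∀ v : E, (inner A v x : A) = 0) : x = 0 :=
  CStarModule.inner_self.mp (h x)

lemma CStarReg.eq_zero_of_inner_left (x : E) (h : ∀ v : E, (inner A x v : A) = 0) : x = 0 :=
  CStarModule.inner_self.mp (h x)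

lemma CStarReg.ext_of_inner_right {x y : E} (h : ∀ v : E, (inner A v x : A) = inner A v y) :
    x = y := by
  have : x - y = 0 := CStarReg.eq_zero_of_inner_right (A := A) _ (fun v => by
    rw [CStarModule.inner_sub_right, h, sub_self])
  exact sub_eq_zero.mp this

lemma CStarReg.ext_of_inner_left {x y : E} (h : ∀ v : E, (inner A x v : A) = inner A y v) :
    x = y := by
  refine CStarReg.ext_of_inner_right (A := A) (fun v => ?_)
  rw [← CStarModule.star_inner x, ← CStarModule.star_inner y, h]

namespace CStarReg.Adjointable

variable (a : Adjointable A E F)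

lemma inner_adj (y : F) (x : E) : (inner A y (a.toFun x) : A) = inner A (a.adjFun y) x := by
  rw [← CStarModule.star_inner, a.adjoint_eq, CStarModule.star_inner]

/-- The adjoint of an adjointable operator, as an adjointable operator. -/
def flip : Adjointable A F E where
  toFun := a.adjFun
  adjFun := a.toFun
  adjoint_eq y x := by rw [← CStarModule.star_inner, ← a.adjoint_eq, CStarModule.star_inner]

@[simp] lemma flip_toFun : a.flip.toFun = a.adjFun := rfl
@[simp] lemma flip_adjFun : a.flip.adjFun = a.toFun := rfl

lemma map_add (x y : E) : a.toFun (x + y) = a.toFun x + a.toFun y := by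
  refine ext_of_inner_right (A := A) (fun v => ?_)
  rw [inner_adj, CStarModule.inner_add_right, CStarModule.inner_add_right,
    inner_adj, inner_adj]

lemma map_smul (c : ℂ) (x : E) : a.toFun (c • x) = c • a.toFun x := by
  refine ext_of_inner_right (A := A) (fun v => ?_)
  rw [inner_adj, CStarModule.inner_smul_right_complex, CStarModule.inner_smul_right_complex,
    inner_adj]

lemma map_op_smul (m : A) (x : E) : a.toFun (m • x) = m • (a.toFun x) := by
  refine ext_of_inner_right (A := A) (fun v => ?_)
  rw [inner_adj, CStarModule.inner_op_smul_right, CStarModule.inner_op_smul_right, inner_adj]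

lemma map_zero : a.toFun 0 = 0 := by
  have h := a.map_add 0 0
  rw [add_zero] at h
  exact add_left_cancel (a := a.toFun 0) (by rw [← h, add_zero])

lemma map_sub (x y : E) : a.toFun (x - y) = a.toFun x - a.toFun y := by
  refine ext_of_inner_right (A := A) (fun v => ?_)
  rw [inner_adj, CStarModule.inner_sub_right, CStarModule.inner_sub_right, inner_adj, inner_adj]

lemma adj_map_add (y z : F) : a.adjFun (y + z) = a.adjFun y + a.adjFun z :=
  a.flip.map_add y z

lemma adj_map_sub (y z : F) : a.adjFun (y - z) = a.adjFun y - a.adjFun z :=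
  a.flip.map_sub y z

lemma adj_map_smul (c : ℂ) (y : F) : a.adjFun (c • y) = c • a.adjFun y :=
  a.flip.map_smul c y

lemma adj_map_zero : a.adjFun 0 = 0 := a.flip.map_zero

/-- An adjointable operator bundled as a `ℂ`-linear map. -/
def toLinearMap : E →ₗ[ℂ] F where
  toFun := a.toFun
  map_add' := a.map_add
  map_smul' := a.map_smul

variable [CompleteSpace E] [CompleteSpace F]

set_option linter.unusedSectionVars false in

lemma isClosed_graph : IsClosed (a.toLinearMap.graph : Set (E × F)) := by
  letI : NormedSpace ℂ E := .ofCore (CStarModule.normedSpaceCore A)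
  letI : NormedSpace ℂ F := .ofCore (CStarModule.normedSpaceCore A)

  have hset : (a.toLinearMap.graph : Set (E × F)) =
      ⋂ v : F, {p : E × F | (inner A p.2 v : A) = inner A p.1 (a.adjFun v)} := by
    ext p
    simp only [Set.mem_iInter, Set.mem_setOf_eq, SetLike.mem_coe, LinearMap.mem_graph_iff]
    constructor
    · intro hp v
      rw [show p.2 = a.toFun p.1 from hp]
      exact a.adjoint_eq p.1 v
    · intro h
      refine (ext_of_inner_left (A := A) (fun v => ?_)).symm
      rw [h v, ← a.adjoint_eq]
      rfl
  rw [hset]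
  exact isClosed_iInter fun v => isClosed_eq
    ((CStarModule.continuous_inner (A := A) (E := F)).comp (continuous_snd.prodMk continuous_const))
    ((CStarModule.continuous_inner (A := A) (E := E)).comp (continuous_fst.prodMk continuous_const))

/-- An adjointable operator bundled as a continuous `ℂ`-linear map. -/
noncomputable def toCLM : E →L[ℂ] F := by
  letI : NormedSpace ℂ E := .ofCore (CStarModule.normedSpaceCore A)
  letI : NormedSpace ℂ F := .ofCore (CStarModule.normedSpaceCore A)
  exact ContinuousLinearMap.ofIsClosedGraph a.isClosed_graph

@[simp] lemma toCLM_apply (x : E) : a.toCLM x = a.toFun x := rfl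

lemma continuous : Continuous a.toFun := a.toCLM.continuous

end CStarReg.Adjointable

end ModuleBasics
section CStarScalar

variable {A : Type*} [NonUnitalCStarAlgebra A] [PartialOrder A] [StarOrderedRing A]

/-- In a C⋆-algebra, `‖h - λ • p‖ ≥ |Im λ| * ‖p‖` for `h` self-adjoint and `p ≥ 0`. -/
lemma CStarReg.norm_sub_smul_ge (h p : A) (hh : star h = h) (hp : (0 : A) ≤ p) (lam : ℂ) :
    |lam.im| * ‖p‖ ≤ ‖h - lam • p‖ := by
  have hps : star p = p := IsSelfAdjoint.of_nonneg hp
  set x := h - lam • p with hx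
  have hstar : x - star x = (starRingEnd ℂ lam - lam) • p := by
    rw [hx, star_sub, star_smul, hps, hh, sub_smul]
    simp only [Complex.star_def]
    abel
  have hkey : ‖starRingEnd ℂ lam - lam‖ = 2 * |lam.im| := by
    have h1 : starRingEnd ℂ lam - lam = -(lam - starRingEnd ℂ lam) := by ring
    rw [h1, norm_neg, Complex.sub_conj]
    simp [abs_mul]
  have hnorm1 : ‖x - star x‖ = (2 * |lam.im|) * ‖p‖ := by
    rw [hstar, norm_smul, hkey]
  have hnorm2 : ‖x - star x‖ ≤ 2 * ‖x‖ := by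
    calc ‖x - star x‖ ≤ ‖x‖ + ‖star x‖ := norm_sub_le _ _
    _ = 2 * ‖x‖ := by rw [norm_star]; ring
  nlinarith [norm_nonneg x, norm_nonneg p, abs_nonneg lam.im]

end CStarScalar

section Spectral

variable {X : Type*} [NormedAddCommGroup X] [NormedSpace ℂ X] [CompleteSpace X]

open ContinuousLinearMap

lemma CStarReg.not_mem_spectrum_of_boundedBelow (R : X →L[ℂ] X) (lam : ℂ) {k : ℝ} (hk : 0 < k)
    (hbb : ∀ y, k * ‖y‖ ≤ ‖R y - lam • y‖)
    (hcl : ∀ ε > 0, ∃ mu : ℂ, ‖mu - lam‖ < ε ∧ mu ∉ spectrum ℂ R) :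
    lam ∉ spectrum ℂ R := by
  obtain ⟨mu, hmud, hmu⟩ := hcl (k/3) (by linarith)
  have hd0 : 0 ≤ ‖mu - lam‖ := norm_nonneg _
  set d := ‖mu - lam‖ with hd
  have hkd : 0 < k - d := by
    rw [hd]; linarith
  have hU : IsUnit (algebraMap ℂ (X →L[ℂ] X) mu - R) := spectrum.notMem_iff.mp hmu
  set u := hU.unit with hu
  have happ : ∀ y : X, (algebraMap ℂ (X →L[ℂ] X) mu - R) y = mu • y - R y := by
    intro y
    rw [Algebra.algebraMap_eq_smul_one]
    simp
  have hbbmu : ∀ y : X, (k - d) * ‖y‖ ≤ ‖(algebraMap ℂ (X →L[ℂ] X) mu - R) y‖ := by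
    intro y
    rw [happ]
    have h1 : ‖R y - lam • y‖ - ‖(mu - lam) • y‖ ≤ ‖mu • y - R y‖ := by
      calc ‖R y - lam • y‖ - ‖(mu - lam) • y‖ ≤ ‖(R y - lam • y) - (mu - lam) • y‖ :=
            norm_sub_norm_le _ _
      _ = ‖mu • y - R y‖ := by
            rw [← norm_neg]; congr 1; rw [sub_smul]; abel
    have h2 : ‖(mu - lam) • y‖ = d * ‖y‖ := by rw [norm_smul]
    have h3 := hbb y
    nlinarith [norm_nonneg y]
  have hinv : ‖(↑u⁻¹ : X →L[ℂ] X)‖ ≤ (k - d)⁻¹ := by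
    refine opNorm_le_bound _ (le_of_lt (by positivity)) (fun z => ?_)
    have h1 : (↑u * ↑u⁻¹ : X →L[ℂ] X) z = z := by rw [u.mul_inv]; rfl
    have h2 := hbbmu ((↑u⁻¹ : X →L[ℂ] X) z)
    rw [show (algebraMap ℂ (X →L[ℂ] X) mu - R) ((↑u⁻¹ : X →L[ℂ] X) z) = z from h1] at h2
    rw [le_inv_mul_iff₀ hkd]
    exact h2
  have hsmall : ‖(lam - mu) • (↑u⁻¹ : X →L[ℂ] X)‖ < 1 := by
    rw [norm_smul (lam - mu) (↑u⁻¹ : X →L[ℂ] X)]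
    have h1 : ‖lam - mu‖ = d := by rw [hd, ← norm_neg (mu - lam)]; congr 1; abel
    rw [h1]
    calc d * ‖(↑u⁻¹ : X →L[ℂ] X)‖ ≤ d * (k - d)⁻¹ :=
          mul_le_mul_of_nonneg_left hinv hd0
    _ < 1 := by
          rw [mul_inv_lt_iff₀ hkd]
          rw [hd]
          linarith
  have hunit2 : IsUnit ((1 : X →L[ℂ] X) + (lam - mu) • (↑u⁻¹ : X →L[ℂ] X)) := by
    have hval : ((Units.oneSub (-((lam - mu) • (↑u⁻¹ : X →L[ℂ] X))) (by rwa [norm_neg])) :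
        X →L[ℂ] X) = 1 + (lam - mu) • (↑u⁻¹ : X →L[ℂ] X) := by
      rw [Units.val_oneSub, sub_neg_eq_add]
    exact hval ▸ (Units.oneSub _ _).isUnit
  have hfact : algebraMap ℂ (X →L[ℂ] X) lam - R =
      (↑u : X →L[ℂ] X) * ((1 : X →L[ℂ] X) + (lam - mu) • (↑u⁻¹ : X →L[ℂ] X)) := by
    have hsm : ((lam - mu) • (1 : X →L[ℂ] X)) = algebraMap ℂ (X →L[ℂ] X) (lam - mu) :=
      (Algebra.algebraMap_eq_smul_one _).symm
    rw [mul_add, mul_one, mul_smul_comm, u.mul_inv, IsUnit.unit_spec, hsm, map_sub]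
    abel
  rw [spectrum.notMem_iff, hfact]
  exact u.isUnit.mul hunit2

end Spectral
section Spectral2

variable {X : Type*} [NormedAddCommGroup X] [NormedSpace ℂ X] [CompleteSpace X]

lemma CStarReg.surjective_of_boundedBelow (R : X →L[ℂ] X)
    (h0 : ∃ k > 0, ∀ y, k * ‖y‖ ≤ ‖R y‖)
    (him : ∀ γ : ℂ, γ.im ≠ 0 → ∀ y, |γ.im| * ‖y‖ ≤ ‖R y - γ • y‖) :
    Function.Surjective R := by
  have hreal : ∀ z ∈ spectrum ℂ R, z.im = 0 := by
    intro z hz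
    by_contra hzim
    have hcpt : IsCompact (spectrum ℂ R) := spectrum.isCompact R
    have hfc : Continuous fun w : ℂ => |w.im| := continuous_abs.comp Complex.continuous_im
    obtain ⟨l, hl, hlmax⟩ := hcpt.exists_isMaxOn ⟨z, hz⟩ hfc.continuousOn
    have hzl : |z.im| ≤ |l.im| := hlmax hz
    have hlim : l.im ≠ 0 := by
      intro h
      rw [h, abs_zero] at hzl
      exact hzim (abs_eq_zero.mp (le_antisymm hzl (abs_nonneg _)))
    have hlabs : 0 < |l.im| := abs_pos.mpr hlim
    refine (CStarReg.not_mem_spectrum_of_boundedBelow R l hlabs (him l hlim) ?_) hl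
    intro ε hε
    set t : ℝ := ε / (2 * |l.im|) with ht
    have ht0 : 0 < t := by positivity
    refine ⟨l + (↑(t * l.im) * Complex.I), ?_, ?_⟩
    · have harith : t * |l.im| = ε / 2 := by
        rw [ht]
        field_simp
      have heq : l + (↑(t * l.im) * Complex.I) - l = ↑(t * l.im) * Complex.I := by ring
      rw [heq, norm_mul, Complex.norm_real, Complex.norm_I, mul_one, Real.norm_eq_abs,
          abs_mul, abs_of_pos ht0, harith]
      linarith
    · intro hmem
      have hle := hlmax hmem
      have him' : (l + (↑(t * l.im) * Complex.I)).im = l.im * (1 + t) := by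
        simp only [Complex.add_im, Complex.mul_im, Complex.ofReal_re, Complex.I_im,
          Complex.ofReal_im, Complex.I_re, mul_zero, mul_one, zero_mul, add_zero]
        ring
      have habs : |l.im * (1 + t)| = |l.im| * (1 + t) := by
        rw [abs_mul, abs_of_pos (show (0:ℝ) < 1 + t by linarith)]
      simp only [Set.mem_setOf_eq] at hle
      rw [him', habs] at hle
      nlinarith
  obtain ⟨k, hk, hbb⟩ := h0
  have h0' : (0 : ℂ) ∉ spectrum ℂ R := by
    refine CStarReg.not_mem_spectrum_of_boundedBelow R 0 hk (fun y => by simpa using hbb y) ?_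
    intro ε hε
    refine ⟨(↑(ε/2) * Complex.I), ?_, ?_⟩
    · rw [sub_zero, norm_mul, Complex.norm_real, Complex.norm_I, mul_one, Real.norm_eq_abs,
          abs_of_pos (by linarith)]
      linarith
    · intro hmem
      have h := hreal _ hmem
      simp only [Complex.mul_im, Complex.ofReal_re, Complex.I_im, Complex.ofReal_im,
        Complex.I_re, mul_zero, add_zero, mul_one, zero_mul] at h
      linarith
  have hunit : IsUnit R := by
    have h1 := spectrum.notMem_iff.mp h0'
    rw [map_zero, zero_sub] at h1
    have := h1.neg
    rwa [neg_neg] at this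
  obtain ⟨v, hv⟩ := hunit
  intro z
  refine ⟨(↑v⁻¹ : X →L[ℂ] X) z, ?_⟩
  calc R ((↑v⁻¹ : X →L[ℂ] X) z) = (↑v * ↑v⁻¹ : X →L[ℂ] X) z := by rw [hv]; rfl
    _ = z := by rw [v.mul_inv]; rfl

end Spectral2
namespace CStarReg

section Core

set_option linter.unusedSectionVars false

variable {A : Type*} [NonUnitalCStarAlgebra A] [PartialOrder A] [StarOrderedRing A]
variable {E : Type*} [NormedAddCommGroup E] [Module ℂ E] [SMul A E] [CStarModule A E]
  [CompleteSpace E]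
variable {F : Type*} [NormedAddCommGroup F] [Module ℂ F] [SMul A F] [CStarModule A F]
  [CompleteSpace F]
variable {G : Type*} [NormedAddCommGroup G] [Module ℂ G] [SMul A G] [CStarModule A G]
  [CompleteSpace G]


lemma prod_star_inner (p q : E × F) : star (inner A p q : A) = inner A q p := by
  show star ((inner A p.1 q.1 : A) + inner A p.2 q.2) = _
  rw [star_add, CStarModule.star_inner, CStarModule.star_inner]
  rfl

lemma prod_inner_self_nonneg (p : E × F) : (0 : A) ≤ inner A p p :=
  add_nonneg CStarModule.inner_self_nonneg CStarModule.inner_self_nonneg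

lemma prod_inner_self_eq_zero {p : E × F} (h : (inner A p p : A) = 0) : p = 0 := by
  have h1 : (inner A p.1 p.1 : A) = 0 ∧ (inner A p.2 p.2 : A) = 0 := by
    have hn1 : (0:A) ≤ inner A p.1 p.1 := CStarModule.inner_self_nonneg
    have hn2 : (0:A) ≤ inner A p.2 p.2 := CStarModule.inner_self_nonneg
    constructor
    · refine le_antisymm ?_ hn1
      calc (inner A p.1 p.1 : A) = (inner A p.1 p.1 : A) + 0 := (add_zero _).symm
        _ ≤ (inner A p.1 p.1 : A) + inner A p.2 p.2 := by exact add_le_add le_rfl hn2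
        _ = 0 := h
    · refine le_antisymm ?_ hn2
      calc (inner A p.2 p.2 : A) = 0 + (inner A p.2 p.2 : A) := (zero_add _).symm
        _ ≤ (inner A p.1 p.1 : A) + inner A p.2 p.2 := by exact add_le_add hn1 le_rfl
        _ = 0 := h
  have e1 : p.1 = 0 := CStarModule.inner_self.mp h1.1
  have e2 : p.2 = 0 := CStarModule.inner_self.mp h1.2
  exact Prod.ext e1 e2

variable (a : Adjointable A G E) (b : Adjointable A G F)

/-- The column operator `x ↦ (a x, b x)`. -/
def Tfun (x : G) : E × F := (a.toFun x, b.toFun x)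

/-- The row operator `(y, z) ↦ a* y + b* z`. -/
def Sfun (p : E × F) : G := a.adjFun p.1 + b.adjFun p.2

lemma inner_T (x : G) (p : E × F) : (inner A (Tfun a b x) p : A) = inner A x (Sfun a b p) := by
  show (inner A (a.toFun x) p.1 : A) + inner A (b.toFun x) p.2 = _
  rw [a.adjoint_eq, b.adjoint_eq, Sfun, CStarModule.inner_add_right]

lemma inner_T' (p : E × F) (x : G) : (inner A p (Tfun a b x) : A) = inner A (Sfun a b p) x := by
  rw [← prod_star_inner, inner_T, CStarModule.star_inner]

lemma Tfun_add (x y : G) : Tfun a b (x + y) = Tfun a b x + Tfun a b y := by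
  show (_, _) = _
  rw [a.map_add, b.map_add]; rfl

lemma Tfun_sub (x y : G) : Tfun a b (x - y) = Tfun a b x - Tfun a b y := by
  show (_, _) = _
  rw [a.map_sub, b.map_sub]; rfl

lemma Tfun_smul (c : ℂ) (x : G) : Tfun a b (c • x) = c • Tfun a b x := by
  show (_, _) = _
  rw [a.map_smul, b.map_smul]; rfl

lemma Tfun_zero : Tfun a b 0 = 0 := by
  show (_, _) = _
  rw [a.map_zero, b.map_zero]; rfl

lemma Sfun_sub (p q : E × F) : Sfun a b (p - q) = Sfun a b p - Sfun a b q := by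
  show a.adjFun (p.1 - q.1) + b.adjFun (p.2 - q.2) = _
  rw [show a.adjFun (p.1 - q.1) = a.adjFun p.1 - a.adjFun q.1 from a.flip.map_sub p.1 q.1,
    show b.adjFun (p.2 - q.2) = b.adjFun p.2 - b.adjFun q.2 from b.flip.map_sub p.2 q.2]
  show _ = (a.adjFun p.1 + b.adjFun p.2) - (a.adjFun q.1 + b.adjFun q.2)
  abel

lemma Tfun_continuous : Continuous (Tfun a b) :=
  Continuous.prodMk a.continuous b.continuous

lemma Sfun_continuous : Continuous (Sfun a b) := by
  have h1 : Continuous fun p : E × F => a.adjFun p.1 :=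
    a.flip.continuous.comp continuous_fst
  have h2 : Continuous fun p : E × F => b.adjFun p.2 :=
    b.flip.continuous.comp continuous_snd
  exact h1.add h2

set_option maxHeartbeats 2000000 in
open WithCStarModule in
/-- Key decomposition: every `w` splits off its projection onto the closed range of
`x ↦ (a x, b x)`. -/
theorem exists_decomp (hclosed : IsClosed {p : E × F | ∃ x : G, p = (a.toFun x, b.toFun x)})
    (w : E × F) : ∃ x : G, Sfun a b (w - Tfun a b x) = 0 := by
  classical
  letI : NormedSpace ℂ G := .ofCore (CStarModule.normedSpaceCore A)

  -- the C*-module structure on the product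
  set X := C⋆ᵐᵒᵈ(A, E × F) with hX
  have hbridge : ∀ u v : X, (inner A u v : A) = inner A (equiv A (E × F) u) (equiv A (E × F) v) :=
    fun u v => rfl
  -- the range submodule
  set gsub : Submodule ℂ X :=
    { carrier := {q : X | ∃ x : G, equiv A (E × F) q = Tfun a b x}
      add_mem' := by
        rintro q r ⟨x, hx⟩ ⟨y, hy⟩
        exact ⟨x + y, by rw [Tfun_add, ← hx, ← hy]; rfl⟩
      zero_mem' := ⟨0, by rw [Tfun_zero]; rfl⟩
      smul_mem' := by
        rintro c q ⟨x, hx⟩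
        exact ⟨c • x, by rw [Tfun_smul, ← hx]; rfl⟩ } with hgsub
  have hgclosed : IsClosed (gsub : Set X) := by
    have : (gsub : Set X) = (equiv A (E × F)) ⁻¹'
        {p : E × F | ∃ x : G, p = (a.toFun x, b.toFun x)} := by
      ext q
      simp only [Set.mem_preimage, Set.mem_setOf_eq]
      exact ⟨fun ⟨x, hx⟩ => ⟨x, hx⟩, fun ⟨x, hx⟩ => ⟨x, hx⟩⟩
    rw [this]
    exact hclosed.preimage (uniformEquiv (A := A) (E := E × F)).continuous
  haveI : CompleteSpace gsub := hgclosed.completeSpace_coe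
  -- the operator T as a continuous linear map onto the submodule
  have hTmem : ∀ x : G, ((equiv A (E × F)).symm (Tfun a b x) : X) ∈ gsub := fun x => ⟨x, rfl⟩
  set Tc : G →L[ℂ] gsub :=
    { toFun := fun x => ⟨(equiv A (E × F)).symm (Tfun a b x), hTmem x⟩
      map_add' := fun x y => by
        apply Subtype.ext
        show (equiv A (E × F)).symm (Tfun a b (x + y)) = _
        rw [Tfun_add]; rfl
      map_smul' := fun c x => by
        apply Subtype.ext
        show (equiv A (E × F)).symm (Tfun a b (c • x)) = _
        rw [Tfun_smul]; rfl
      cont := by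
        refine Continuous.subtype_mk ?_ _
        exact ((uniformEquiv (A := A) (E := E × F)).symm.continuous).comp (Tfun_continuous a b) }
    with hTc
  have hTcsurj : Function.Surjective Tc := by
    rintro ⟨q, x, hx⟩
    exact ⟨x, Subtype.ext (by
      show (equiv A (E × F)).symm (Tfun a b x) = q
      rw [← hx]
      exact (equiv A (E × F)).symm_apply_apply q)⟩
  obtain ⟨C, hC0, hCspec⟩ := ContinuousLinearMap.exists_preimage_norm_le Tc hTcsurj
  -- the operator R = T T* restricted to the submodule
  have hRmem : ∀ q : gsub, ((equiv A (E × F)).symm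
      (Tfun a b (Sfun a b (equiv A (E × F) (q : X)))) : X) ∈ gsub :=
    fun q => ⟨Sfun a b (equiv A (E × F) (q : X)), rfl⟩
  set R : gsub →L[ℂ] gsub :=
    { toFun := fun q => ⟨(equiv A (E × F)).symm (Tfun a b (Sfun a b (equiv A (E × F) (q : X)))),
        hRmem q⟩
      map_add' := fun q r => by
        apply Subtype.ext
        show (equiv A (E × F)).symm (Tfun a b (Sfun a b (equiv A (E × F) ((q : X) + (r : X))))) = _
        have h1 : Sfun a b (equiv A (E × F) ((q : X) + (r : X))) =
            Sfun a b (equiv A (E × F) (q : X)) + Sfun a b (equiv A (E × F) (r : X)) := by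
          show a.adjFun _ + b.adjFun _ = _
          rw [show (equiv A (E × F) ((q : X) + (r : X))).1 =
                (equiv A (E × F) (q : X)).1 + (equiv A (E × F) (r : X)).1 from rfl,
              show (equiv A (E × F) ((q : X) + (r : X))).2 =
                (equiv A (E × F) (q : X)).2 + (equiv A (E × F) (r : X)).2 from rfl,
              a.adj_map_add, b.adj_map_add]
          show _ = (a.adjFun _ + b.adjFun _) + (a.adjFun _ + b.adjFun _)
          abel
        rw [h1, Tfun_add]; rfl
      map_smul' := fun c q => by
        apply Subtype.ext
        show (equiv A (E × F)).symm (Tfun a b (Sfun a b (equiv A (E × F) (c • (q : X))))) = _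
        have h1 : Sfun a b (equiv A (E × F) (c • (q : X))) =
            c • Sfun a b (equiv A (E × F) (q : X)) := by
          show a.adjFun _ + b.adjFun _ = _
          rw [show (equiv A (E × F) (c • (q : X))).1 = c • (equiv A (E × F) (q : X)).1 from rfl,
              show (equiv A (E × F) (c • (q : X))).2 = c • (equiv A (E × F) (q : X)).2 from rfl,
              a.adj_map_smul, b.adj_map_smul,
              show Sfun a b (equiv A (E × F) (q : X)) =
                a.adjFun (equiv A (E × F) (q : X)).1 + b.adjFun (equiv A (E × F) (q : X)).2 from rfl,
              smul_add]
        rw [h1, Tfun_smul]; rfl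
      cont := by
        refine Continuous.subtype_mk ?_ _
        refine ((uniformEquiv (A := A) (E := E × F)).symm.continuous).comp ?_
        refine (Tfun_continuous a b).comp ?_
        refine (Sfun_continuous a b).comp ?_
        exact (uniformEquiv (A := A) (E := E × F)).continuous.comp continuous_subtype_val }
    with hR
  -- values of R
  have hRval : ∀ q : gsub, equiv A (E × F) ((R q : X)) =
      Tfun a b (Sfun a b (equiv A (E × F) (q : X))) := fun q => rfl
  have hnormsq : ∀ q : gsub, ‖q‖^2 = ‖(inner A ((q : X)) ((q : X)) : A)‖ := by
    intro q
    show ‖(q : X)‖^2 = _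
    exact CStarModule.norm_sq_eq A
  -- bounded below at 0
  have hbb0 : ∀ y : gsub, (C^2)⁻¹ * ‖y‖ ≤ ‖R y‖ := by
    intro y
    rcases eq_or_ne y 0 with rfl | hy
    · simp
    have hy' : 0 < ‖y‖ := norm_pos_iff.mpr hy
    obtain ⟨x, hTx, hxC⟩ := hCspec y
    set vy := equiv A (E × F) (y : X) with hvydef
    set u := Sfun a b vy with hudef
    have hvy : Tfun a b x = vy := congrArg (equiv A (E × F)) (congrArg Subtype.val hTx)
    have hh : (inner A vy vy : A) = inner A x u := by
      calc (inner A vy vy : A) = inner A (Tfun a b x) vy := by rw [hvy]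
        _ = inner A x u := inner_T a b x vy
    have hselfadj : star (inner A vy vy : A) = inner A vy vy := by
      rw [prod_star_inner]
    have hsq : (inner A vy vy : A) * inner A vy vy = inner A x u * inner A u x := by
      calc (inner A vy vy : A) * inner A vy vy = (inner A vy vy : A) * star (inner A vy vy) := by
            rw [hselfadj]
        _ = (inner A x u : A) * star (inner A x u) := by rw [hh]
        _ = (inner A x u : A) * inner A u x := by rw [CStarModule.star_inner]
    have hCS : (inner A x u : A) * inner A u x ≤ ‖x‖^2 • inner A u u :=
      CStarModule.inner_mul_inner_swap_le
    have huu : (inner A u u : A) = inner A (equiv A (E × F) ((R y : X))) vy := by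
      rw [hRval y, ← hudef]
      exact (inner_T a b u vy).symm
    have h3 : (0:A) ≤ inner A x u * inner A u x := by
      have h3' := mul_star_self_nonneg (inner A x u : A)
      rwa [CStarModule.star_inner] at h3'
    have h4 : ‖(inner A x u : A) * inner A u x‖ ≤ ‖x‖^2 * ‖(inner A u u : A)‖ := by
      calc ‖(inner A x u : A) * inner A u x‖ ≤ ‖(‖x‖^2 • inner A u u : A)‖ :=
            CStarAlgebra.norm_le_norm_of_nonneg_of_le h3 hCS
        _ = ‖x‖^2 * ‖(inner A u u : A)‖ := by
            rw [norm_smul, Real.norm_eq_abs, abs_of_nonneg (by positivity)]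
    have h5 : ‖(inner A (equiv A (E × F) ((R y : X))) vy : A)‖ ≤ ‖R y‖ * ‖y‖ :=
      CStarModule.norm_inner_le X (x := ((R y : X))) (y := ((y : X)))
    have h2 : ‖(inner A vy vy : A)‖^2 = ‖(inner A vy vy : A) * inner A vy vy‖ := by
      calc ‖(inner A vy vy : A)‖^2 = ‖star (inner A vy vy : A) * inner A vy vy‖ := by
            rw [CStarRing.norm_star_mul_self, pow_two]
        _ = ‖(inner A vy vy : A) * inner A vy vy‖ := by rw [hselfadj]
    have hxC' : ‖x‖^2 ≤ C^2 * ‖y‖^2 := by nlinarith [norm_nonneg x, norm_nonneg y]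
    have hkey : ‖y‖^4 ≤ C^2 * ‖y‖^2 * (‖R y‖ * ‖y‖) := by
      calc ‖y‖^4 = (‖y‖^2)^2 := by ring
        _ = ‖(inner A vy vy : A)‖^2 := by
            rw [hnormsq y]
            exact congrArg (fun z : A => ‖z‖^2) (hbridge (y : X) (y : X))
        _ = ‖(inner A vy vy : A) * inner A vy vy‖ := h2
        _ = ‖(inner A x u : A) * inner A u x‖ := by rw [hsq]
        _ ≤ ‖x‖^2 * ‖(inner A u u : A)‖ := h4
        _ = ‖x‖^2 * ‖(inner A (equiv A (E × F) ((R y : X))) vy : A)‖ := by rw [huu]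
        _ ≤ (C^2 * ‖y‖^2) * (‖R y‖ * ‖y‖) :=
            mul_le_mul hxC' h5 (norm_nonneg _) (by positivity)
    rw [inv_mul_le_iff₀ (by positivity)]
    nlinarith [pow_pos hy' 3, norm_nonneg (R y), hy']
  -- bounded below at nonreal points
  have hbbim : ∀ γ : ℂ, γ.im ≠ 0 → ∀ y : gsub, |γ.im| * ‖y‖ ≤ ‖R y - γ • y‖ := by
    intro γ hγ y
    rcases eq_or_ne y 0 with rfl | hy
    · simp
    have hy' : 0 < ‖y‖ := norm_pos_iff.mpr hy
    set vy := equiv A (E × F) (y : X) with hvydef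
    set u := Sfun a b vy with hudef
    have hpos : (0:A) ≤ inner A ((y : X)) ((y : X)) := prod_inner_self_nonneg vy
    have hhval : (inner A ((y : X)) ((R y : X)) : A) = inner A u u := by
      rw [hbridge, hRval y, ← hudef]
      exact inner_T' a b vy u
    have hhsa : star (inner A ((y : X)) ((R y : X)) : A) = inner A ((y : X)) ((R y : X)) := by
      rw [hhval, CStarModule.star_inner]
    have hsub : (inner A ((y : X)) (((R y - γ • y : gsub) : X)) : A)
        = inner A ((y : X)) ((R y : X)) - γ • inner A ((y : X)) ((y : X)) := by
      have hval : ((R y - γ • y : gsub) : X) = (R y : X) - γ • (y : X) := rfl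
      rw [hval, CStarModule.inner_sub_right, CStarModule.inner_smul_right_complex]
    have hC1 := CStarReg.norm_sub_smul_ge (inner A ((y : X)) ((R y : X)) : A)
      (inner A ((y : X)) ((y : X))) hhsa hpos γ
    have hnp : ‖(inner A ((y : X)) ((y : X)) : A)‖ = ‖y‖^2 := (hnormsq y).symm
    have hni : ‖(inner A ((y : X)) (((R y - γ • y : gsub) : X)) : A)‖ ≤ ‖y‖ * ‖R y - γ • y‖ :=
      CStarModule.norm_inner_le X (x := ((y : X))) (y := (((R y - γ • y : gsub) : X)))
    rw [← hsub, hnp] at hC1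
    have hfin : |γ.im| * ‖y‖^2 ≤ ‖y‖ * ‖R y - γ • y‖ := le_trans hC1 hni
    nlinarith [abs_nonneg γ.im, hy']
  -- R is surjective
  have hsurjR := CStarReg.surjective_of_boundedBelow R ⟨(C^2)⁻¹, by positivity, hbb0⟩ hbbim
  -- conclude
  set v0 : gsub := ⟨(equiv A (E × F)).symm (Tfun a b (Sfun a b w)), ⟨Sfun a b w, rfl⟩⟩ with hv0
  obtain ⟨q, hq⟩ := hsurjR v0
  obtain ⟨xu, hxu⟩ := q.2
  refine ⟨xu, ?_⟩
  have h1 : equiv A (E × F) ((R q : X)) = Tfun a b (Sfun a b w) :=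
    congrArg (fun z : gsub => equiv A (E × F) (z : X)) hq
  rw [hRval q, hxu] at h1
  set d := Sfun a b (w - Tfun a b xu) with hd
  have hTd : Tfun a b d = 0 := by
    rw [hd, Sfun_sub, Tfun_sub, h1, sub_self]
  have hdd : (inner A d d : A) = 0 := by
    have h2 := inner_T a b d (w - Tfun a b xu)
    rw [hTd] at h2
    have h3 : (inner A (0 : E × F) (w - Tfun a b xu) : A) = 0 := by
      show (inner A (0:E) _ : A) + inner A (0:F) _ = 0
      rw [CStarModule.inner_zero_left, CStarModule.inner_zero_left, add_zero]
    rw [h3] at h2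
    exact h2.symm
  exact CStarModule.inner_self.mp hdd

end Core

end CStarReg

section Transfer

open MulOpposite

set_option linter.unusedSectionVars false

noncomputable instance CStarReg.opCStarModule {A : Type*} [NonUnitalCStarAlgebra A]
    [PartialOrder A] [StarOrderedRing A] {E : Type*} [NormedAddCommGroup E] [Module ℂ E]
    [SMul Aᵐᵒᵖ E] [CStarModuleRight A E] : CStarModule Aᵐᵒᵖ E where
  inner x y := op (inner A x y)
  inner_add_right {x y z} :=
    congrArg op (CStarModuleRight.inner_add_right (x := x) (y := y) (z := z))
  inner_self_nonneg {x} := (CStarModuleRight.inner_self_nonneg (x := x) : (0 : A) ≤ inner A x x)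
  inner_self {x} := by
    show op (inner A x x) = 0 ↔ x = 0
    rw [op_eq_zero_iff]
    exact CStarModuleRight.inner_self
  inner_op_smul_right {a x y} :=
    congrArg op (CStarModuleRight.inner_op_smul_right (a := unop a) (x := x) (y := y))
  inner_smul_right_complex {z x y} :=
    congrArg op (CStarModuleRight.inner_smul_right_complex (z := z) (x := x) (y := y))
  star_inner x y := congrArg op (CStarModuleRight.star_inner x y)
  norm_eq_sqrt_norm_inner_self x := CStarModuleRight.norm_eq_sqrt_norm_inner_self x

namespace CStarReg

/-- An adjointable operator, viewed with the opposite-algebra-valued inner product. -/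
def Adjointable.toOp (a : Adjointable A E F) : Adjointable Aᵐᵒᵖ E F where
  toFun := a.toFun
  adjFun := a.adjFun
  adjoint_eq x y := congrArg op (a.adjoint_eq x y)

namespace Adjointable

variable (a : Adjointable A E F)

lemma rmap_zero : a.toFun 0 = 0 := a.toOp.map_zero
lemma rmap_add (x y : E) : a.toFun (x + y) = a.toFun x + a.toFun y := a.toOp.map_add x y
lemma rmap_smul (c : ℂ) (x : E) : a.toFun (c • x) = c • a.toFun x := a.toOp.map_smul c x
lemma rmap_op_smul (m : A) (x : E) : a.toFun (x <• m) = a.toFun x <• m :=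
  a.toOp.map_op_smul (op m) x
lemma rinner_adj (y : F) (x : E) : inner A y (a.toFun x) = inner A (a.adjFun y) x :=
  congrArg unop (a.toOp.inner_adj y x)

end Adjointable

namespace R

lemma inner_zero_left {x : E} : inner A (0 : E) x = 0 :=
  congrArg unop (CStarModule.inner_zero_left (A := Aᵐᵒᵖ) (x := x))

lemma inner_sub_left {x y z : E} : inner A (x - y) z = inner A x z - inner A y z :=
  congrArg unop (CStarModule.inner_sub_left (A := Aᵐᵒᵖ) (x := x) (y := y) (z := z))

lemma eq_zero_of_inner_left (x : E) (h : ∀ v : E, inner A x v = 0) : x = 0 :=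
  CStarReg.eq_zero_of_inner_left (A := Aᵐᵒᵖ) x (fun v => by
    show op (inner A x v) = 0
    rw [h v, op_zero])

lemma ext_of_inner_right {x y : E} (h : ∀ v : E, inner A v x = inner A v y) : x = y :=
  CStarReg.ext_of_inner_right (A := Aᵐᵒᵖ) (fun v => by
    show op (inner A v x) = op (inner A v y)
    rw [h v])

lemma prod_star_inner (p q : E × F) : star (inner A p q) = inner A q p :=
  congrArg unop (CStarReg.prod_star_inner (A := Aᵐᵒᵖ) p q)

lemma prod_inner_self_eq_zero {p : E × F} (h : inner A p p = 0) : p = 0 :=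
  CStarReg.prod_inner_self_eq_zero (A := Aᵐᵒᵖ) (congrArg op h)

/-- The column operator `x ↦ (a x, b x)` for right Hilbert modules. -/
def Tfun (a : Adjointable A G E) (b : Adjointable A G F) (x : G) : E × F := (a.toFun x, b.toFun x)

/-- The row operator `(y, z) ↦ a* y + b* z` for right Hilbert modules. -/
def Sfun (a : Adjointable A G E) (b : Adjointable A G F) (p : E × F) : G :=
  a.adjFun p.1 + b.adjFun p.2

lemma inner_T' (a : Adjointable A G E) (b : Adjointable A G F) (p : E × F) (x : G) :
    inner A p (Tfun a b x) = inner A (Sfun a b p) x :=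
  congrArg unop (CStarReg.inner_T' a.toOp b.toOp p x)

lemma exists_decomp (a : Adjointable A G E) (b : Adjointable A G F)
    (hclosed : IsClosed {p : E × F | ∃ x : G, p = (a.toFun x, b.toFun x)})
    (w : E × F) : ∃ x : G, Sfun a b (w - Tfun a b x) = 0 :=
  CStarReg.exists_decomp a.toOp b.toOp hclosed w

end R

end CStarReg

end Transfer
/-- A closed quotient `t = b ∘ a⁻¹` of adjointable operators (with
`Null(a) ⊆ Null(b)` and `Null(a*) = {0}`) is graph regular, and `t* = (a*)⁻¹ ∘ b*`. -/
theorem closed_quotient_graphRegular (a : Adjointable A G E) (b : Adjointable A G F)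
    (hker : ∀ x : G, a.toFun x = 0 → b.toFun x = 0)
    (hkera : ∀ y : E, a.adjFun y = 0 → y = 0)
    (hclosed : IsClosed {p : E × F | ∃ x : G, p = (a.toFun x, b.toFun x)}) :
    (∃ u : CStarReg.Unbounded A E F,
      u.graph = {p : E × F | ∃ x : G, p = (a.toFun x, b.toFun x)}) ∧
    ∀ u : CStarReg.Unbounded A E F,
      u.graph = {p : E × F | ∃ x : G, p = (a.toFun x, b.toFun x)} →
        u.GraphRegular ∧ adjSet A u.graph = {q : F × E | a.adjFun q.2 = b.adjFun q.1} := by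
  classical
  set g : Set (E × F) := {p : E × F | ∃ x : G, p = (a.toFun x, b.toFun x)} with hg
  have hmemT : ∀ x : G, R.Tfun a b x ∈ g := fun x => ⟨x, rfl⟩
  have horthochar : ortho A g = {v : E × F | R.Sfun a b v = 0} := by
    ext v
    constructor
    · intro hv
      show R.Sfun a b v = 0
      refine CStarReg.R.eq_zero_of_inner_left (A := A) _ (fun x => ?_)
      rw [← R.inner_T' a b v x]
      exact hv (R.Tfun a b x) (hmemT x)
    · intro hv p hp
      obtain ⟨x, hpx⟩ := hp
      rw [hpx]
      show (inner A v (R.Tfun a b x) : A) = 0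
      rw [R.inner_T' a b v x]
      simp only [Set.mem_setOf_eq] at hv
      rw [hv]
      exact R.inner_zero_left
  constructor
  · -- existence of the operator
    refine ⟨{ graph := g
              zero_mem := ⟨0, by rw [a.rmap_zero, b.rmap_zero]⟩
              add_mem := by
                rintro p q ⟨x, rfl⟩ ⟨y, rfl⟩
                exact ⟨x + y, by rw [a.rmap_add, b.rmap_add]; rfl⟩
              smul_mem := by
                rintro c p ⟨x, rfl⟩
                exact ⟨c • x, by rw [a.rmap_smul, b.rmap_smul]; rfl⟩
              smulA_mem := by
                rintro m p ⟨x, rfl⟩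
                exact ⟨x <• m, by rw [a.rmap_op_smul, b.rmap_op_smul]⟩
              single_valued := by
                intro y hy
                obtain ⟨x, hx⟩ := hy
                have h1 : (0 : E) = a.toFun x := congrArg Prod.fst hx
                have h2 : y = b.toFun x := congrArg Prod.snd hx
                rw [h2, hker x h1.symm] }, rfl⟩
  · intro u hu
    have hadj : adjSet A u.graph = {q : F × E | a.adjFun q.2 = b.adjFun q.1} := by
      rw [hu]
      ext q
      constructor
      · intro hq
        have h1 : ∀ x : G, (inner A (b.toFun x) q.1 : A) = inner A (a.toFun x) q.2 :=
          fun x => hq (a.toFun x, b.toFun x) ⟨x, rfl⟩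
        have h2 : b.adjFun q.1 = a.adjFun q.2 := by
          refine CStarReg.R.ext_of_inner_right (A := A) (fun x => ?_)
          rw [← b.adjoint_eq, ← a.adjoint_eq]
          exact h1 x
        exact h2.symm
      · intro hq p hp
        obtain ⟨x, hpx⟩ := hp
        rw [hpx]
        show (inner A (b.toFun x) q.1 : A) = inner A (a.toFun x) q.2
        simp only [Set.mem_setOf_eq] at hq
        rw [b.adjoint_eq, a.adjoint_eq, hq]
    refine ⟨⟨?_, ?_, ?_⟩, hadj⟩
    · -- essentially defined
      show IsEssential A u.dom
      unfold IsEssential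
      ext y
      constructor
      · intro hy
        have h1 : ∀ x : G, (inner A y (a.toFun x) : A) = 0 := by
          intro x
          refine hy (a.toFun x) ?_
          refine ⟨(a.toFun x, b.toFun x), ?_, rfl⟩
          rw [hu]
          exact ⟨x, rfl⟩
        have h2 : a.adjFun y = 0 := by
          refine CStarReg.R.eq_zero_of_inner_left (A := A) _ (fun x => ?_)
          rw [← a.rinner_adj]
          exact h1 x
        exact hkera y h2
      · intro hy
        simp only [Set.mem_singleton_iff] at hy
        subst hy
        intro z hz
        exact R.inner_zero_left
    · -- orthogonally closed
      show ortho A (ortho A u.graph) = u.graph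
      rw [hu]
      ext w
      constructor
      · intro hw
        obtain ⟨x, hx⟩ := CStarReg.R.exists_decomp a b hclosed w
        have hv : (w - R.Tfun a b x) ∈ ortho A g := by
          rw [horthochar]
          exact hx
        have hvw : (inner A w (w - R.Tfun a b x) : A) = 0 := hw _ hv
        have hvT : (inner A (R.Tfun a b x) (w - R.Tfun a b x) : A) = 0 := by
          rw [← R.prod_star_inner, hv (R.Tfun a b x) (hmemT x), star_zero]
        have hsubl : (inner A (w - R.Tfun a b x) (w - R.Tfun a b x) : A)
            = (inner A w (w - R.Tfun a b x) : A) - inner A (R.Tfun a b x) (w - R.Tfun a b x) := by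
          show (inner A (w.1 - (R.Tfun a b x).1) _ : A) + inner A (w.2 - (R.Tfun a b x).2) _ = _
          rw [R.inner_sub_left, R.inner_sub_left]
          show _ = ((inner A w.1 _ : A) + inner A w.2 _) -
            ((inner A (R.Tfun a b x).1 _ : A) + inner A (R.Tfun a b x).2 _)
          abel
        have hvv : (inner A (w - R.Tfun a b x) (w - R.Tfun a b x) : A) = 0 := by
          rw [hsubl, hvw, hvT, sub_zero]
        have hzero : w - R.Tfun a b x = 0 := R.prod_inner_self_eq_zero hvv
        have hw' : w = R.Tfun a b x := by rwa [sub_eq_zero] at hzero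
        rw [hw']
        exact hmemT x
      · intro hwg v hv
        rw [← R.prod_star_inner, hv w hwg, star_zero]
    · -- complemented
      rw [hu]
      refine Set.eq_univ_of_forall (fun w => ?_)
      obtain ⟨x, hx⟩ := CStarReg.R.exists_decomp a b hclosed w
      rw [Set.mem_add]
      refine ⟨R.Tfun a b x, hmemT x, w - R.Tfun a b x, ?_, by abel⟩
      rw [horthochar]
      exact hx

end Statements
end
end

section
/- Let a ∈ Adj(G,E), b ∈ Adj(G,F), a_* ∈ Adj(H,F), b_* ∈ Adj(H,E) satisfy b*a_* = a*b_*, and assume Null(a*) = {0} and Null(a_**) = {0}. Then Null(a) ⊆ Null(b) and Null(a_*) ⊆ Null(b_*), so the operators t (D(t) = Range(a), t(ax) := bx) and t' (D(t') = Range(a_*), t'(a_* y) := b_* y) are well-defined; they are essentially defined, orthogonally closable, and satisfy (t')** ⊆ t* and t** ⊆ (t')*. If in addition t and t' are closed and a b* = b_* a_**, then t* = t' and t is graph regular. -/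
open scoped RightActions Pointwise

noncomputable section

/-- The December 2024 Mathlib `CStarModule` (right Hilbert C*-modules, `SMul Aᵐᵒᵖ E`),
restored with its old meaning since Mathlib's class now describes left modules. -/
class RightCStarModule (A : outParam <| Type*) (E : Type*) [NonUnitalSemiring A] [StarRing A]
    [Module ℂ A] [AddCommGroup E] [Module ℂ E] [PartialOrder A] [SMul Aᵐᵒᵖ E] [Norm A] [Norm E]
    extends Inner A E where
  inner_add_right {x} {y} {z} : inner x (y + z) = inner x y + inner x z
  inner_self_nonneg {x} : 0 ≤ inner x x
  inner_self {x} : inner x x = 0 ↔ x = 0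
  inner_op_smul_right {a : A} {x y : E} : inner x (y <• a) = inner x y * a
  inner_smul_right_complex {z : ℂ} {x} {y} : inner x (z • y) = z • inner x y
  star_inner x y : star (inner x y) = inner y x
  norm_eq_sqrt_norm_inner_self x : ‖x‖ = √‖inner x x‖

namespace RCS
open scoped RightActions
variable {A : Type*} [NonUnitalCStarAlgebra A] [PartialOrder A]

section general
variable {E : Type*} [AddCommGroup E] [Module ℂ E] [SMul Aᵐᵒᵖ E] [Norm E] [RightCStarModule A E]

local notation "⟪" x ", " y "⟫" => (inner A x y : A)

lemma inner_add_right {x y z : E} : ⟪x, y + z⟫ = ⟪x, y⟫ + ⟪x, z⟫ :=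
  RightCStarModule.inner_add_right
lemma inner_self_nonneg {x : E} : 0 ≤ ⟪x, x⟫ := RightCStarModule.inner_self_nonneg
lemma inner_self {x : E} : ⟪x, x⟫ = 0 ↔ x = 0 := RightCStarModule.inner_self
lemma inner_op_smul_right {a : A} {x y : E} : ⟪x, y <• a⟫ = ⟪x, y⟫ * a :=
  RightCStarModule.inner_op_smul_right
lemma inner_smul_right_complex {z : ℂ} {x y : E} : ⟪x, z • y⟫ = z • ⟪x, y⟫ :=
  RightCStarModule.inner_smul_right_complex
lemma star_inner (x y : E) : star ⟪x, y⟫ = ⟪y, x⟫ := RightCStarModule.star_inner x y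
lemma norm_eq_sqrt_norm_inner_self (x : E) : ‖x‖ = √‖⟪x, x⟫‖ :=
  RightCStarModule.norm_eq_sqrt_norm_inner_self x

lemma inner_add_left {x y z : E} : ⟪x + y, z⟫ = ⟪x, z⟫ + ⟪y, z⟫ := by
  rw [← star_inner, inner_add_right, star_add, star_inner, star_inner]
lemma inner_op_smul_left {a : A} {x y : E} : ⟪x <• a, y⟫ = star a * ⟪x, y⟫ := by
  rw [← star_inner, inner_op_smul_right, star_mul, star_inner]
lemma inner_smul_left_complex {z : ℂ} {x y : E} : ⟪z • x, y⟫ = star z • ⟪x, y⟫ := by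
  rw [← star_inner, inner_smul_right_complex, star_smul, star_inner]
lemma inner_smul_left_real {z : ℝ} {x y : E} : ⟪z • x, y⟫ = z • ⟪x, y⟫ := by
  have h₁ : z • x = (z : ℂ) • x := by simp
  rw [h₁, inner_smul_left_complex]
  simp
lemma inner_smul_right_real {z : ℝ} {x y : E} : ⟪x, z • y⟫ = z • ⟪x, y⟫ := by
  have h₁ : z • y = (z : ℂ) • y := by simp
  rw [h₁, inner_smul_right_complex]
  simp

/-- The inner product as a sesquilinear map. -/
def innerSL' : E →ₗ⋆[ℂ] E →ₗ[ℂ] A where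
  toFun x := { toFun := fun y => ⟪x, y⟫
               map_add' := fun z y => inner_add_right
               map_smul' := fun z y => inner_smul_right_complex }
  map_add' z y := by ext; exact inner_add_left
  map_smul' z y := by ext; exact inner_smul_left_complex

lemma innerSL'_apply {x y : E} : innerSL' x y = ⟪x, y⟫ := rfl

lemma inner_zero_right {x : E} : ⟪x, 0⟫ = 0 := by simp [← innerSL'_apply]
lemma inner_zero_left {x : E} : ⟪0, x⟫ = 0 := by simp [← innerSL'_apply]
lemma inner_neg_right {x y : E} : ⟪x, -y⟫ = -⟪x, y⟫ := by simp [← innerSL'_apply]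
lemma inner_neg_left {x y : E} : ⟪-x, y⟫ = -⟪x, y⟫ := by simp [← innerSL'_apply]
lemma inner_sub_right {x y z : E} : ⟪x, y - z⟫ = ⟪x, y⟫ - ⟪x, z⟫ := by
  simp [← innerSL'_apply]
lemma inner_sub_left {x y z : E} : ⟪x - y, z⟫ = ⟪x, z⟫ - ⟪y, z⟫ := by
  simp [← innerSL'_apply]

lemma norm_sq_eq {x : E} : ‖x‖ ^ 2 = ‖⟪x, x⟫‖ := by
  rw [norm_eq_sqrt_norm_inner_self (A := A), Real.sq_sqrt (norm_nonneg _)]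

lemma norm_nonneg' (A : Type*) [NonUnitalCStarAlgebra A] [PartialOrder A] [SMul Aᵐᵒᵖ E]
    [RightCStarModule A E] {x : E} : 0 ≤ ‖x‖ := by
  rw [norm_eq_sqrt_norm_inner_self (A := A)]; exact Real.sqrt_nonneg _

lemma norm_pos' (A : Type*) [NonUnitalCStarAlgebra A] [PartialOrder A] [SMul Aᵐᵒᵖ E]
    [RightCStarModule A E] {x : E} (hx : x ≠ 0) : 0 < ‖x‖ := by
  rw [norm_eq_sqrt_norm_inner_self (A := A), Real.sqrt_pos, norm_pos_iff]
  intro H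
  exact hx (inner_self.mp H)

lemma norm_zero' (A : Type*) [NonUnitalCStarAlgebra A] [PartialOrder A] [SMul Aᵐᵒᵖ E]
    [RightCStarModule A E] : ‖(0 : E)‖ = 0 := by
  rw [norm_eq_sqrt_norm_inner_self (A := A), inner_zero_left]; simp

lemma norm_zero_iff' (A : Type*) [NonUnitalCStarAlgebra A] [PartialOrder A] [SMul Aᵐᵒᵖ E]
    [RightCStarModule A E] (x : E) : ‖x‖ = 0 ↔ x = 0 :=
  ⟨fun h => by
    rw [norm_eq_sqrt_norm_inner_self (A := A), Real.sqrt_eq_zero (norm_nonneg _),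
      norm_eq_zero] at h
    exact inner_self.mp h, fun h => by rw [h]; exact norm_zero' A⟩

variable [StarOrderedRing A]

lemma inner_star_mul_inner_le {x y : E} : ⟪y, x⟫ * ⟪x, y⟫ ≤ ‖x‖ ^ 2 • ⟪y, y⟫ := by
  rcases eq_or_ne x 0 with h | h
  · rw [h, inner_zero_left, inner_zero_right, zero_mul]
    exact smul_nonneg (by positivity) inner_self_nonneg
  · have h₁ : ∀ (a : A),
        (0 : A) ≤ ‖x‖ ^ 2 • (star a * a) - ‖x‖ ^ 2 • (⟪y, x⟫ * a)
                  - ‖x‖ ^ 2 • (star a * ⟪x, y⟫) + ‖x‖ ^ 2 • (‖x‖ ^ 2 • ⟪y, y⟫) := fun a => by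
      calc (0 : A) ≤ ⟪x <• a - ‖x‖ ^ 2 • y, x <• a - ‖x‖ ^ 2 • y⟫ := inner_self_nonneg
        _ = star a * ⟪x, x⟫ * a - ‖x‖ ^ 2 • (⟪y, x⟫ * a)
                  - ‖x‖ ^ 2 • (star a * ⟪x, y⟫) + ‖x‖ ^ 2 • (‖x‖ ^ 2 • ⟪y, y⟫) := by
                      simp only [inner_sub_right, inner_op_smul_right, inner_sub_left,
                        inner_op_smul_left, inner_smul_left_real, mul_sub, mul_smul_comm,
                        inner_smul_right_real, smul_sub, mul_assoc, smul_mul_assoc, sub_mul]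
                      abel
        _ ≤ ‖x‖ ^ 2 • (star a * a) - ‖x‖ ^ 2 • (⟪y, x⟫ * a)
                  - ‖x‖ ^ 2 • (star a * ⟪x, y⟫) + ‖x‖ ^ 2 • (‖x‖ ^ 2 • ⟪y, y⟫) := by
                      gcongr
                      calc _ ≤ ‖⟪x, x⟫‖ • (star a * a) :=
                          CStarAlgebra.star_left_conjugate_le_norm_smul (hb := star_inner x x)
                        _ = (√‖⟪x, x⟫‖) ^ 2 • (star a * a) := by
                          rw [Real.sq_sqrt]
                          positivity
                        _ = ‖x‖ ^ 2 • (star a * a) := by rw [← norm_eq_sqrt_norm_inner_self]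
    specialize h₁ ⟪x, y⟫
    simp only [star_inner, sub_self, zero_sub, le_neg_add_iff_add_le, add_zero] at h₁
    rwa [smul_le_smul_iff_of_pos_left (pow_pos (norm_pos' A h) _)] at h₁

variable (E) in
lemma norm_inner_le {x y : E} : ‖⟪x, y⟫‖ ≤ ‖x‖ * ‖y‖ := by
  have := calc ‖⟪x, y⟫‖ ^ 2 = ‖⟪y, x⟫ * ⟪x, y⟫‖ := by
                rw [← star_inner x, CStarRing.norm_star_mul_self, pow_two]
    _ ≤ ‖‖x‖ ^ 2 • ⟪y, y⟫‖ := by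
                refine CStarAlgebra.norm_le_norm_of_nonneg_of_le ?_ inner_star_mul_inner_le
                rw [← star_inner x]
                exact star_mul_self_nonneg ⟪x, y⟫
    _ = ‖x‖ ^ 2 * ‖⟪y, y⟫‖ := by
                rw [norm_smul, Real.norm_eq_abs, abs_of_nonneg (by positivity)]
    _ = ‖x‖ ^ 2 * ‖y‖ ^ 2 := by rw [norm_sq_eq (A := A) (x := y)]
    _ = (‖x‖ * ‖y‖) ^ 2 := by rw [mul_pow]
  refine (pow_le_pow_iff_left₀ (norm_nonneg _) ?_ (by simp)).mp this
  exact mul_nonneg (norm_nonneg' A) (norm_nonneg' A)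

lemma norm_triangle' (A : Type*) [NonUnitalCStarAlgebra A] [PartialOrder A] [StarOrderedRing A]
    [SMul Aᵐᵒᵖ E] [RightCStarModule A E] (x y : E) : ‖x + y‖ ≤ ‖x‖ + ‖y‖ := by
  have h : ‖x + y‖ ^ 2 ≤ (‖x‖ + ‖y‖) ^ 2 := by
    calc ‖x + y‖ ^ 2 = ‖(inner A x x : A) + (inner A y x : A) + (inner A x y : A) + (inner A y y : A)‖ := by
          rw [norm_sq_eq (A := A), inner_add_left, inner_add_right, inner_add_right]
          congr 1; abel
      _ ≤ ‖(inner A x x : A)‖ + ‖(inner A y x : A)‖ + ‖(inner A x y : A)‖ + ‖(inner A y y : A)‖ := by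
          refine (norm_add_le _ _).trans ?_
          gcongr
          refine (norm_add_le _ _).trans ?_
          gcongr
          exact norm_add_le _ _
      _ ≤ ‖(inner A x x : A)‖ + ‖y‖ * ‖x‖ + ‖x‖ * ‖y‖ + ‖(inner A y y : A)‖ := by
          gcongr <;> exact norm_inner_le E
      _ = ‖x‖ ^ 2 + ‖y‖ * ‖x‖ + ‖x‖ * ‖y‖ + ‖y‖ ^ 2 := by
          rw [norm_sq_eq (A := A) (x := x), norm_sq_eq (A := A) (x := y)]
      _ = (‖x‖ + ‖y‖) ^ 2 := by ring
  refine (pow_le_pow_iff_left₀ (norm_nonneg' A) ?_ (by simp)).mp h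
  exact add_nonneg (norm_nonneg' A) (norm_nonneg' A)

lemma normedSpaceCore (A : Type*) [NonUnitalCStarAlgebra A] [PartialOrder A] [StarOrderedRing A]
    [SMul Aᵐᵒᵖ E] [RightCStarModule A E] : NormedSpace.Core ℂ E where
  norm_nonneg _ := norm_nonneg' A
  norm_eq_zero_iff x := norm_zero_iff' A x
  norm_smul c x := by
    rw [norm_eq_sqrt_norm_inner_self (A := A), norm_eq_sqrt_norm_inner_self (A := A) x,
      inner_smul_left_complex, inner_smul_right_complex, smul_smul, norm_smul,
      Real.sqrt_mul (norm_nonneg _), norm_mul, norm_star, Real.sqrt_mul_self (norm_nonneg _)]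
  norm_triangle x y := norm_triangle' A x y

end general

section normed
variable [StarOrderedRing A]
variable {E : Type*} [NormedAddCommGroup E] [NormedSpace ℂ E] [SMul Aᵐᵒᵖ E]
  [RightCStarModule A E]

lemma continuous_inner : Continuous (fun x : E × E => (inner A x.1 x.2 : A)) := by
  let f : E →L⋆[ℂ] E →L[ℂ] A :=
    LinearMap.mkContinuous₂ (innerSL' : E →ₗ⋆[ℂ] E →ₗ[ℂ] A) 1 <| fun x y => by
      rw [innerSL'_apply, one_mul]; exact norm_inner_le E
  have : (fun x : E × E => (inner A x.1 x.2 : A)) = fun x => f x.1 x.2 := rfl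
  rw [this]
  fun_prop

end normed

/-- Type synonym for the product of two right Hilbert C*-modules carrying the C*-module norm. -/
def PMod (A : Type*) (E : Type*) := E

section prod
variable [StarOrderedRing A]
variable {E F : Type*} [NormedAddCommGroup E] [NormedSpace ℂ E] [SMul Aᵐᵒᵖ E]
  [RightCStarModule A E] [NormedAddCommGroup F] [NormedSpace ℂ F] [SMul Aᵐᵒᵖ F]
  [RightCStarModule A F]

instance : AddCommGroup (PMod A (E × F)) := inferInstanceAs (AddCommGroup (E × F))
instance : Module ℂ (PMod A (E × F)) := inferInstanceAs (Module ℂ (E × F))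
instance : SMul Aᵐᵒᵖ (PMod A (E × F)) := inferInstanceAs (SMul Aᵐᵒᵖ (E × F))
instance : Inner A (PMod A (E × F)) := inferInstanceAs (Inner A (E × F))
noncomputable instance : Norm (PMod A (E × F)) := ⟨fun p => √‖(inner A p p : A)‖⟩

instance : RightCStarModule A (PMod A (E × F)) where
  inner_add_right {x y z} := by
    show (inner A x.1 (y.1 + z.1) : A) + inner A x.2 (y.2 + z.2) = _
    rw [inner_add_right, inner_add_right]
    show _ = ((inner A x.1 y.1 : A) + inner A x.2 y.2) + ((inner A x.1 z.1 : A) + inner A x.2 z.2)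
    abel
  inner_self_nonneg {x} := add_nonneg (inner_self_nonneg (x := x.1)) (inner_self_nonneg (x := x.2))
  inner_self {x} := by
    constructor
    · intro h
      have h' : (inner A x.1 x.1 : A) + inner A x.2 x.2 = 0 := h
      have h1 : (inner A x.1 x.1 : A) = 0 :=
        le_antisymm (h' ▸ le_add_of_nonneg_right inner_self_nonneg) inner_self_nonneg
      rw [h1, zero_add] at h'
      exact Prod.ext (inner_self.mp h1) (inner_self.mp h')
    · rintro rfl
      show (inner A (0 : E) 0 : A) + inner A (0 : F) 0 = 0
      rw [inner_zero_left, inner_zero_left, add_zero]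
  inner_op_smul_right {a x y} := by
    show (inner A x.1 (y.1 <• a) : A) + inner A x.2 (y.2 <• a) = _
    rw [inner_op_smul_right, inner_op_smul_right, ← add_mul]
    rfl
  inner_smul_right_complex {z x y} := by
    show (inner A x.1 (z • y.1) : A) + inner A x.2 (z • y.2) = _
    rw [inner_smul_right_complex, inner_smul_right_complex, ← smul_add]
    rfl
  star_inner x y := by
    show star ((inner A x.1 y.1 : A) + inner A x.2 y.2) = (inner A y.1 x.1 : A) + inner A y.2 x.2
    rw [star_add, star_inner, star_inner]
  norm_eq_sqrt_norm_inner_self x := rfl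

noncomputable instance : NormedAddCommGroup (PMod A (E × F)) :=
  NormedAddCommGroup.ofCore (normedSpaceCore A)

noncomputable instance : NormedSpace ℂ (PMod A (E × F)) :=
  NormedSpace.ofCore (normedSpaceCore A)

lemma pmod_norm_sq (p : PMod A (E × F)) :
    ‖p‖ ^ 2 = ‖(inner A p.1 p.1 : A) + inner A p.2 p.2‖ := norm_sq_eq (A := A)

/-- The identity between the synonym and the plain product, as a linear equivalence. -/
def pmodLE : PMod A (E × F) ≃ₗ[ℂ] E × F := LinearEquiv.refl ℂ (E × F)

lemma pmodLE_bound1 (p : PMod A (E × F)) : ‖pmodLE p‖ ≤ 1 * ‖p‖ := by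
  rw [one_mul]
  have h1 : ‖p.1‖ ^ 2 ≤ ‖p‖ ^ 2 := by
    rw [pmod_norm_sq, norm_sq_eq (A := A)]
    exact CStarAlgebra.norm_le_norm_of_nonneg_of_le inner_self_nonneg
      (le_add_of_nonneg_right inner_self_nonneg)
  have h2 : ‖p.2‖ ^ 2 ≤ ‖p‖ ^ 2 := by
    rw [pmod_norm_sq, norm_sq_eq (A := A)]
    exact CStarAlgebra.norm_le_norm_of_nonneg_of_le inner_self_nonneg
      (le_add_of_nonneg_left inner_self_nonneg)
  show max ‖p.1‖ ‖p.2‖ ≤ ‖p‖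
  exact max_le (pow_le_pow_iff_left₀ (norm_nonneg _) (norm_nonneg _) two_ne_zero |>.mp h1)
    (pow_le_pow_iff_left₀ (norm_nonneg _) (norm_nonneg _) two_ne_zero |>.mp h2)

lemma pmodLE_bound2 (p : E × F) : ‖(pmodLE (A := A)).symm p‖ ≤ 2 * ‖p‖ := by
  have h : ‖(pmodLE (A := A)).symm p‖ ^ 2 ≤ (2 * ‖p‖) ^ 2 := by
    rw [pmod_norm_sq]
    refine (norm_add_le _ _).trans ?_
    show ‖(inner A p.1 p.1 : A)‖ + ‖(inner A p.2 p.2 : A)‖ ≤ _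
    rw [← norm_sq_eq (A := A), ← norm_sq_eq (A := A)]
    have := norm_fst_le p
    have := norm_snd_le p
    nlinarith [norm_nonneg p.1, norm_nonneg p.2, norm_nonneg p]
  exact pow_le_pow_iff_left₀ (norm_nonneg _) (by positivity) two_ne_zero |>.mp h

/-- The identity between the synonym and the plain product, as a continuous linear
equivalence. -/
noncomputable def pmodCLE : PMod A (E × F) ≃L[ℂ] E × F where
  toLinearEquiv := pmodLE (A := A)
  continuous_toFun := AddMonoidHomClass.continuous_of_bound (pmodLE (A := A)) 1 pmodLE_bound1
  continuous_invFun :=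
    AddMonoidHomClass.continuous_of_bound (pmodLE (A := A)).symm 2 pmodLE_bound2

instance [CompleteSpace E] [CompleteSpace F] : CompleteSpace (PMod A (E × F)) :=
  (completeSpace_congr (e := (pmodCLE (A := A) (E := E) (F := F)).toEquiv)
    (pmodCLE (A := A) (E := E) (F := F)).isUniformEmbedding).mpr inferInstance

end prod

end RCS


set_option linter.unusedSectionVars false
set_option maxHeartbeats 2000000

section AuxProof
open CStarModule
variable {A : Type*} [NonUnitalCStarAlgebra A] [PartialOrder A] [StarOrderedRing A]
local notation "⟪" x ", " y "⟫" => (inner A x y : A)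

section Basic
variable {E : Type*} [NormedAddCommGroup E] [Module ℂ E] [SMul Aᵐᵒᵖ E] [RightCStarModule A E]

lemma inner_self_zero' {x : E} (h : ⟪x, x⟫ = 0) : x = 0 := RCS.inner_self.mp h

lemma eq_zero_of_forall_inner_left' {x : E} (h : ∀ y : E, ⟪x, y⟫ = 0) : x = 0 :=
  inner_self_zero' (h x)

lemma eq_of_forall_inner_left' {x y : E} (h : ∀ z : E, ⟪x, z⟫ = ⟪y, z⟫) : x = y := by
  have h2 : x - y = 0 := eq_zero_of_forall_inner_left' (fun z => by
    rw [RCS.inner_sub_left, h, sub_self])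
  exact sub_eq_zero.mp h2

lemma pos_eq_zero_of_add {p q : A} (hp : 0 ≤ p) (hq : 0 ≤ q) (h : p + q = 0) : p = 0 :=
  le_antisymm (h ▸ le_add_of_nonneg_right hq) hp

lemma opSmul_add (m : Aᵐᵒᵖ) (x y : E) : m • (x + y) = m • x + m • y := by
  induction m using MulOpposite.rec' with
  | h m =>
    refine eq_of_forall_inner_left' fun z => ?_
    show ⟪(x + y) <• m, z⟫ = ⟪x <• m + y <• m, z⟫
    rw [RCS.inner_op_smul_left, RCS.inner_add_left, RCS.inner_add_left,
      RCS.inner_op_smul_left, RCS.inner_op_smul_left, mul_add]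

end Basic

section AdjPair
variable {E F : Type*} [NormedAddCommGroup E] [NormedSpace ℂ E] [SMul Aᵐᵒᵖ E] [RightCStarModule A E]
  [NormedAddCommGroup F] [NormedSpace ℂ F] [SMul Aᵐᵒᵖ F] [RightCStarModule A F]
variable {T : E → F} {S : F → E}

lemma adj_flip (h : ∀ x y, ⟪T x, y⟫ = ⟪x, S y⟫) : ∀ (y : F) (x : E), ⟪S y, x⟫ = ⟪y, T x⟫ :=
  fun y x => by
    have h2 := congrArg star (h x y)
    rw [RCS.star_inner, RCS.star_inner] at h2
    exact h2.symm

lemma adj_map_add (h : ∀ x y, ⟪T x, y⟫ = ⟪x, S y⟫) (x x' : E) : T (x + x') = T x + T x' :=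
  eq_of_forall_inner_left' fun z => by
    rw [h _ z, RCS.inner_add_left, RCS.inner_add_left, h _ z, h _ z]

lemma adj_map_smul (h : ∀ x y, ⟪T x, y⟫ = ⟪x, S y⟫) (c : ℂ) (x : E) : T (c • x) = c • T x :=
  eq_of_forall_inner_left' fun z => by
    rw [h _ z, RCS.inner_smul_left_complex, RCS.inner_smul_left_complex, h _ z]

lemma adj_map_opSmul (h : ∀ x y, ⟪T x, y⟫ = ⟪x, S y⟫) (m : Aᵐᵒᵖ) (x : E) :
    T (m • x) = m • T x := by
  induction m using MulOpposite.rec' with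
  | h m =>
    exact eq_of_forall_inner_left' fun z => by
      have h1 : T (x <• m) = T (x <• m) := rfl
      show ⟪T (x <• m), z⟫ = ⟪(T x) <• m, z⟫
      rw [h _ z, RCS.inner_op_smul_left, RCS.inner_op_smul_left, h _ z]

lemma adj_map_zero (h : ∀ x y, ⟪T x, y⟫ = ⟪x, S y⟫) : T 0 = 0 :=
  eq_of_forall_inner_left' fun z => by
    rw [h _ z, RCS.inner_zero_left, RCS.inner_zero_left]

lemma adj_map_neg (h : ∀ x y, ⟪T x, y⟫ = ⟪x, S y⟫) (x : E) : T (-x) = -T x :=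
  eq_of_forall_inner_left' fun z => by
    rw [h _ z, RCS.inner_neg_left, RCS.inner_neg_left, h _ z]

lemma adj_map_sub (h : ∀ x y, ⟪T x, y⟫ = ⟪x, S y⟫) (x x' : E) : T (x - x') = T x - T x' :=
  eq_of_forall_inner_left' fun z => by
    rw [h _ z, RCS.inner_sub_left, RCS.inner_sub_left, h _ z, h _ z]

/-- An adjointable pair as a linear map. -/
def adjLM (h : ∀ x y, ⟪T x, y⟫ = ⟪x, S y⟫) : E →ₗ[ℂ] F where
  toFun := T
  map_add' := adj_map_add h
  map_smul' := adj_map_smul h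

variable [CompleteSpace E] [CompleteSpace F]

lemma adj_continuous (h : ∀ x y, ⟪T x, y⟫ = ⟪x, S y⟫) : Continuous T := by
  refine (adjLM h).continuous_of_seq_closed_graph ?_
  intro u x y hu hTu
  refine eq_of_forall_inner_left' fun z => ?_
  have hc : Continuous fun w : F => ⟪w, z⟫ :=
    RCS.continuous_inner.comp (Continuous.prodMk continuous_id continuous_const)
  have l1 : Filter.Tendsto (fun n => ⟪T (u n), z⟫) Filter.atTop (nhds ⟪y, z⟫) :=
    (hc.tendsto y).comp hTu
  have hc2 : Continuous fun w : E => ⟪w, S z⟫ :=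
    RCS.continuous_inner.comp (Continuous.prodMk continuous_id continuous_const)
  have l2 : Filter.Tendsto (fun n => ⟪u n, S z⟫) Filter.atTop (nhds ⟪x, S z⟫) :=
    (hc2.tendsto x).comp hu
  have heq : (fun n => ⟪T (u n), z⟫) = fun n => ⟪u n, S z⟫ := funext fun n => h _ _
  rw [heq] at l1
  have hyx : (⟪y, z⟫) = ⟪x, S z⟫ := tendsto_nhds_unique l1 l2
  exact hyx.trans (h x z).symm

/-- An adjointable pair as a continuous linear map. -/
noncomputable def adjCLM (h : ∀ x y, ⟪T x, y⟫ = ⟪x, S y⟫) : E →L[ℂ] F where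
  toLinearMap := adjLM h
  cont := adj_continuous h

@[simp] lemma adjCLM_apply (h : ∀ x y, ⟪T x, y⟫ = ⟪x, S y⟫) (x : E) : adjCLM h x = T x := rfl

end AdjPair

section Surj
variable {X : Type*} [NormedAddCommGroup X] [NormedSpace ℂ X] [SMul Aᵐᵒᵖ X] [RightCStarModule A X]
  [CompleteSpace X]

lemma unit_perturb {R : Type*} [NormedRing R] [CompleteSpace R] (v : Rˣ) (w : R)
    (h : ‖((v⁻¹ : Rˣ) : R)‖ * ‖w‖ < 1) : IsUnit ((v : R) + w) := by
  have h' : ‖-(((v⁻¹ : Rˣ) : R) * w)‖ < 1 := by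
    rw [norm_neg]
    exact lt_of_le_of_lt (norm_mul_le _ _) h
  have hval : ((v * Units.oneSub (-(((v⁻¹ : Rˣ) : R) * w)) h' : Rˣ) : R) = (v : R) + w := by
    simp only [Units.val_mul, Units.val_oneSub, sub_neg_eq_add, mul_add, mul_one]
    rw [← mul_assoc, v.mul_inv, one_mul]
  exact hval ▸ (v * Units.oneSub _ h').isUnit

lemma clm_smul_opnorm_le (mu : ℂ) (T : X →L[ℂ] X) : ‖mu • T‖ ≤ ‖mu‖ * ‖T‖ := by
  refine ContinuousLinearMap.opNorm_le_bound _ (by positivity) fun x => ?_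
  rw [ContinuousLinearMap.smul_apply, norm_smul, mul_assoc]
  gcongr
  exact T.le_opNorm x

lemma unit_inv_bound {s : (X →L[ℂ] X)ˣ} {c : ℝ} (hc : 0 < c)
    (hlow : ∀ x, c * ‖x‖ ≤ ‖(s : X →L[ℂ] X) x‖) :
    ‖((s⁻¹ : (X →L[ℂ] X)ˣ) : X →L[ℂ] X)‖ ≤ c⁻¹ := by
  refine ContinuousLinearMap.opNorm_le_bound _ (by positivity) fun y => ?_
  have h1 : (s : X →L[ℂ] X) (((s⁻¹ : (X →L[ℂ] X)ˣ) : X →L[ℂ] X) y) = y := by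
    have h2 : ((s : X →L[ℂ] X) * ((s⁻¹ : (X →L[ℂ] X)ˣ) : X →L[ℂ] X)) y = (1 : X →L[ℂ] X) y := by
      rw [s.mul_inv]
    rw [ContinuousLinearMap.mul_apply, ContinuousLinearMap.one_apply] at h2
    exact h2
  have h3 := hlow (((s⁻¹ : (X →L[ℂ] X)ˣ) : X →L[ℂ] X) y)
  rw [h1] at h3
  have h4 := mul_le_mul_of_nonneg_left h3 (inv_nonneg.mpr hc.le)
  rwa [← mul_assoc, inv_mul_cancel₀ hc.ne', one_mul] at h4

theorem surj_of_selfadj_bddBelow (s : X →L[ℂ] X)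
    (hsa : ∀ x y : X, ⟪s x, y⟫ = ⟪x, s y⟫) {c : ℝ} (hc : 0 < c)
    (hlow : ∀ x, c * ‖x‖ ≤ ‖s x‖) : Function.Surjective s := by
  classical
  let u : ℝ → (X →L[ℂ] X) := fun t => s + (((t : ℂ)) * Complex.I) • (1 : X →L[ℂ] X)
  have huapp : ∀ t x, u t x = s x + (((t : ℂ)) * Complex.I) • x := by
    intro t x
    simp [u, ContinuousLinearMap.add_apply, ContinuousLinearMap.smul_apply]
  have hui : ∀ (t : ℝ) (x : X),
      ⟪u t x, u t x⟫ = ⟪s x, s x⟫ + ⟪(((t : ℂ)) * Complex.I) • x, (((t : ℂ)) * Complex.I) • x⟫ := by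
    intro t x
    rw [huapp]
    rw [RCS.inner_add_left, RCS.inner_add_right, RCS.inner_add_right]
    have c1 : ⟪s x, (((t : ℂ)) * Complex.I) • x⟫ = (((t : ℂ)) * Complex.I) • ⟪x, s x⟫ := by
      rw [RCS.inner_smul_right_complex, hsa x x]
    have c2 : ⟪(((t : ℂ)) * Complex.I) • x, s x⟫ = -((((t : ℂ)) * Complex.I) • ⟪x, s x⟫) := by
      rw [RCS.inner_smul_left_complex]
      have hst : star (((t : ℂ)) * Complex.I) = -(((t : ℂ)) * Complex.I) := by
        simp [star_mul', Complex.star_def, Complex.conj_I, Complex.conj_ofReal]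
      rw [hst, neg_smul]
    rw [c1, c2]
    abel
  have hulow : ∀ (t : ℝ) (x : X), c * ‖x‖ ≤ ‖u t x‖ := by
    intro t x
    have h1 : (⟪s x, s x⟫ : A) ≤ ⟪u t x, u t x⟫ := by
      rw [hui]
      exact le_add_of_nonneg_right RCS.inner_self_nonneg
    have h2 : ‖(⟪s x, s x⟫ : A)‖ ≤ ‖(⟪u t x, u t x⟫ : A)‖ :=
      CStarAlgebra.norm_le_norm_of_nonneg_of_le RCS.inner_self_nonneg h1
    have h3 : ‖s x‖ ^ 2 ≤ ‖u t x‖ ^ 2 := by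
      rw [RCS.norm_sq_eq, RCS.norm_sq_eq]
      exact h2
    nlinarith [hlow x, norm_nonneg (u t x), norm_nonneg (s x),
      mul_nonneg hc.le (norm_nonneg x)]
  have hstep : ∀ t t' : ℝ, IsUnit (u t) → |t' - t| < c → IsUnit (u t') := by
    rintro t t' ⟨v, hv⟩ hd
    have hvlow : ∀ x, c * ‖x‖ ≤ ‖(v : X →L[ℂ] X) x‖ := fun x => by
      rw [hv]; exact hulow t x
    have hinv := unit_inv_bound (s := v) hc hvlow
    have hw : u t' = (v : X →L[ℂ] X) + ((((t' - t : ℝ) : ℂ)) * Complex.I) • (1 : X →L[ℂ] X) := by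
      rw [hv]
      show s + ((((t' : ℝ) : ℂ)) * Complex.I) • (1 : X →L[ℂ] X) = _
      rw [add_assoc, ← add_smul]
      congr 1
      push_cast
      ring
    rw [hw]
    refine unit_perturb v _ ?_
    have hn1 : ‖((((t' - t : ℝ) : ℂ)) * Complex.I) • (1 : X →L[ℂ] X)‖ ≤ |t' - t| := by
      refine le_trans (clm_smul_opnorm_le _ _) ?_
      calc ‖(((t' - t : ℝ) : ℂ)) * Complex.I‖ * ‖(1 : X →L[ℂ] X)‖
          ≤ ‖(((t' - t : ℝ) : ℂ)) * Complex.I‖ * 1 := by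
            gcongr
            rw [ContinuousLinearMap.one_def]
            exact ContinuousLinearMap.norm_id_le
        _ = |t' - t| := by
            rw [mul_one, norm_mul, Complex.norm_I, mul_one, Complex.norm_real, Real.norm_eq_abs]
    calc ‖((v⁻¹ : (X →L[ℂ] X)ˣ) : X →L[ℂ] X)‖ * ‖((((t' - t : ℝ) : ℂ)) * Complex.I) • (1 : X →L[ℂ] X)‖
        ≤ c⁻¹ * |t' - t| := by
          apply mul_le_mul hinv hn1 (norm_nonneg _) (by positivity)
      _ < c⁻¹ * c := by
          apply mul_lt_mul_of_pos_left hd (by positivity)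
      _ = 1 := inv_mul_cancel₀ hc.ne'
  have hbig : IsUnit (u (‖s‖ + 1)) := by
    set t : ℝ := ‖s‖ + 1 with ht'
    have ht : (0 : ℝ) < t := by positivity
    have hz : (((t : ℝ) : ℂ)) * Complex.I ≠ 0 :=
      mul_ne_zero (Complex.ofReal_ne_zero.mpr ht.ne') Complex.I_ne_zero
    set μ : ℂ := (((t : ℝ) : ℂ)) * Complex.I with hμ
    have hμn : ‖μ‖ = t := by
      rw [hμ, norm_mul, Complex.norm_I, mul_one, Complex.norm_real, Real.norm_eq_abs,
        abs_of_pos ht]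
    have hsc : ‖-(μ⁻¹ • s)‖ < 1 := by
      rw [norm_neg]
      refine lt_of_le_of_lt (clm_smul_opnorm_le _ _) ?_
      rw [norm_inv, hμn, inv_mul_lt_iff₀ ht, mul_one, ht']
      linarith [norm_nonneg s]
    -- the scalar unit
    have hμunit : IsUnit ((μ • (1 : X →L[ℂ] X))) := by
      refine ⟨⟨μ • 1, μ⁻¹ • 1, ?_, ?_⟩, rfl⟩
      · rw [smul_mul_assoc, mul_smul_comm, mul_one, smul_smul, mul_inv_cancel₀ hz, one_smul]
      · rw [smul_mul_assoc, mul_smul_comm, mul_one, smul_smul, inv_mul_cancel₀ hz, one_smul]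
    obtain ⟨w, hwv⟩ := hμunit
    have hos := Units.oneSub (-(μ⁻¹ • s)) hsc
    have hval : ((w * Units.oneSub (-(μ⁻¹ • s)) hsc : (X →L[ℂ] X)ˣ) : X →L[ℂ] X) = u t := by
      rw [Units.val_mul, hwv, Units.val_oneSub, sub_neg_eq_add, mul_add, mul_one]
      have : (μ • (1 : X →L[ℂ] X)) * (μ⁻¹ • s) = s := by
        rw [smul_mul_assoc, one_mul, smul_smul, mul_inv_cancel₀ hz, one_smul]
      rw [this]
      show μ • (1 : X →L[ℂ] X) + s = s + μ • (1 : X →L[ℂ] X)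
      abel
    exact hval ▸ (w * Units.oneSub _ hsc).isUnit
  -- infimum argument
  set Sset : Set ℝ := {t | 0 ≤ t ∧ IsUnit (u t)} with hSset
  have hne : (‖s‖ + 1) ∈ Sset := ⟨by positivity, hbig⟩
  have hbdd : BddBelow Sset := ⟨0, fun t ht => ht.1⟩
  set m : ℝ := sInf Sset with hm
  have hm0 : 0 ≤ m := le_csInf ⟨_, hne⟩ (fun t ht => ht.1)
  have hmunit : IsUnit (u m) := by
    obtain ⟨t, htS, htlt⟩ := (csInf_lt_iff hbdd ⟨_, hne⟩).mp
      (show sInf Sset < m + c by rw [← hm]; linarith)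
    have hmt : m ≤ t := csInf_le hbdd htS
    exact hstep t m htS.2 (by rw [abs_sub_comm]; rw [abs_of_nonneg (by linarith)]; linarith)
  have hunit : IsUnit s := by
    by_cases hmc : m ≤ c / 2
    · have h0 : IsUnit (u 0) := hstep m 0 hmunit
        (by rw [zero_sub, abs_neg, abs_of_nonneg hm0]; linarith)
      have : u 0 = s := by
        simp [u]
      rwa [this] at h0
    · push_neg at hmc
      exfalso
      have h' : IsUnit (u (m - c / 2)) := hstep m (m - c / 2) hmunit
        (by rw [sub_sub_cancel_left, abs_neg, abs_of_pos (by linarith)]; linarith)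
      have : m ≤ m - c / 2 := csInf_le hbdd ⟨by linarith, h'⟩
      linarith
  obtain ⟨v, hv⟩ := hunit
  intro y
  refine ⟨((v⁻¹ : (X →L[ℂ] X)ˣ) : X →L[ℂ] X) y, ?_⟩
  have h2 := congrArg (fun (f : X →L[ℂ] X) => f y) v.mul_inv
  simpa [ContinuousLinearMap.mul_apply, hv] using h2

end Surj

section ProdBasic
variable {E F : Type*} [NormedAddCommGroup E] [NormedSpace ℂ E] [SMul Aᵐᵒᵖ E] [RightCStarModule A E]
  [NormedAddCommGroup F] [NormedSpace ℂ F] [SMul Aᵐᵒᵖ F] [RightCStarModule A F]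

lemma pInner_def (p q : E × F) : ⟪p, q⟫ = ⟪p.1, q.1⟫ + ⟪p.2, q.2⟫ := rfl

lemma pInner_self_nonneg (p : E × F) : 0 ≤ ⟪p, p⟫ :=
  add_nonneg RCS.inner_self_nonneg RCS.inner_self_nonneg

lemma pos_eq_zero_of_add' {p q : A} (hp : 0 ≤ p) (hq : 0 ≤ q) (h : p + q = 0) : p = 0 :=
  le_antisymm (h ▸ le_add_of_nonneg_right hq) hp

lemma pInner_self_eq_zero {p : E × F} (h : ⟪p, p⟫ = 0) : p = 0 := by
  have h1 : (⟪p.1, p.1⟫ : A) = 0 := pos_eq_zero_of_add' RCS.inner_self_nonneg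
    RCS.inner_self_nonneg h
  have h2 : (⟪p.2, p.2⟫ : A) = 0 := by
    rw [pInner_def, h1, zero_add] at h
    exact h
  exact Prod.ext (RCS.inner_self.mp h1) (RCS.inner_self.mp h2)

lemma pInner_star (p q : E × F) : star (⟪p, q⟫ : A) = ⟪q, p⟫ := by
  rw [pInner_def, pInner_def, star_add, RCS.star_inner, RCS.star_inner]

lemma prod_eq_zero_of_forall_inner {v : E × F} (h : ∀ u : E × F, ⟪u, v⟫ = 0) : v = 0 := by
  have h1 := h (v.1, 0)
  rw [pInner_def] at h1
  simp only [RCS.inner_zero_left] at h1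
  rw [add_zero] at h1
  have h2 := h (0, v.2)
  rw [pInner_def] at h2
  simp only [RCS.inner_zero_left] at h2
  rw [zero_add] at h2
  exact Prod.ext (RCS.inner_self.mp h1) (RCS.inner_self.mp h2)

lemma prod_norm_sq_le (p : E × F) : ‖p‖ ^ 2 ≤ ‖(⟪p, p⟫ : A)‖ := by
  have h1 : (⟪p.1, p.1⟫ : A) ≤ ⟪p, p⟫ := le_add_of_nonneg_right RCS.inner_self_nonneg
  have h2 : (⟪p.2, p.2⟫ : A) ≤ ⟪p, p⟫ := le_add_of_nonneg_left RCS.inner_self_nonneg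
  have hn1 : ‖p.1‖ ^ 2 ≤ ‖(⟪p, p⟫ : A)‖ := by
    rw [RCS.norm_sq_eq (A := A)]
    exact CStarAlgebra.norm_le_norm_of_nonneg_of_le RCS.inner_self_nonneg h1
  have hn2 : ‖p.2‖ ^ 2 ≤ ‖(⟪p, p⟫ : A)‖ := by
    rw [RCS.norm_sq_eq (A := A)]
    exact CStarAlgebra.norm_le_norm_of_nonneg_of_le RCS.inner_self_nonneg h2
  rw [Prod.norm_def]
  rcases max_choice ‖p.1‖ ‖p.2‖ with hm | hm <;> rw [hm]
  · exact hn1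
  · exact hn2

lemma pInner_zero_left (y : E × F) : (⟪(0 : E × F), y⟫ : A) = 0 := by
  rw [pInner_def]
  show (inner A (0 : E) y.1 : A) + inner A (0 : F) y.2 = 0
  rw [RCS.inner_zero_left, RCS.inner_zero_left, add_zero]

lemma pInner_add_left (p q r : E × F) : ⟪p + q, r⟫ = ⟪p, r⟫ + ⟪q, r⟫ := by
  rw [pInner_def, pInner_def, pInner_def]
  show ⟪p.1 + q.1, r.1⟫ + ⟪p.2 + q.2, r.2⟫ = _
  rw [RCS.inner_add_left, RCS.inner_add_left]
  abel

lemma pInner_add_right (p q r : E × F) : ⟪p, q + r⟫ = ⟪p, q⟫ + ⟪p, r⟫ := by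
  rw [pInner_def, pInner_def, pInner_def]
  show ⟪p.1, q.1 + r.1⟫ + ⟪p.2, q.2 + r.2⟫ = _
  rw [RCS.inner_add_right, RCS.inner_add_right]
  abel

lemma pInner_sub_right (p q r : E × F) : ⟪p, q - r⟫ = ⟪p, q⟫ - ⟪p, r⟫ := by
  rw [pInner_def, pInner_def, pInner_def]
  show ⟪p.1, q.1 - r.1⟫ + ⟪p.2, q.2 - r.2⟫ = _
  rw [RCS.inner_sub_right, RCS.inner_sub_right]
  abel

lemma pInner_self_norm_le (w : E × F) : ‖(⟪w, w⟫ : A)‖ ≤ 2 * ‖w‖ ^ 2 := by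
  rw [pInner_def]
  refine le_trans (norm_add_le _ _) ?_
  have h1 : ‖(⟪w.1, w.1⟫ : A)‖ ≤ ‖w‖ ^ 2 := by
    rw [← RCS.norm_sq_eq (A := A)]
    have := norm_fst_le w
    nlinarith [norm_nonneg w.1, norm_nonneg w]
  have h2 : ‖(⟪w.2, w.2⟫ : A)‖ ≤ ‖w‖ ^ 2 := by
    rw [← RCS.norm_sq_eq (A := A)]
    have := norm_snd_le w
    nlinarith [norm_nonneg w.2, norm_nonneg w]
  linarith

/-- Sum of two orthogonal closed "subgroups" is closed. -/
lemma closed_orth_sum [CompleteSpace E] [CompleteSpace F] {S T : Set (E × F)}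
    (hS : IsClosed S) (hT : IsClosed T)
    (hSsub : ∀ p q : E × F, p ∈ S → q ∈ S → p - q ∈ S)
    (hTsub : ∀ p q : E × F, p ∈ T → q ∈ T → p - q ∈ T)
    (horth : ∀ p ∈ S, ∀ q ∈ T, (⟪p, q⟫ : A) = 0) :
    IsClosed {w : E × F | ∃ p ∈ S, ∃ q ∈ T, w = p + q} := by
  have horth' : ∀ p ∈ S, ∀ q ∈ T, (⟪q, p⟫ : A) = 0 := fun p hp q hq => by
    rw [← pInner_star, horth p hp q hq, star_zero]
  have key : ∀ p ∈ S, ∀ q ∈ T, ‖p‖ ≤ 2 * ‖p + q‖ := by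
    intro p hp q hq
    have hi : (⟪p + q, p + q⟫ : A) = ⟪p, p⟫ + ⟪q, q⟫ := by
      rw [pInner_add_left, pInner_add_right, pInner_add_right, horth p hp q hq,
        horth' p hp q hq]
      abel
    have hmono : ‖(⟪p, p⟫ : A)‖ ≤ ‖(⟪p + q, p + q⟫ : A)‖ := by
      rw [hi]
      exact CStarAlgebra.norm_le_norm_of_nonneg_of_le (pInner_self_nonneg p)
        (le_add_of_nonneg_right (pInner_self_nonneg q))
    have hlow := prod_norm_sq_le p
    have hup := pInner_self_norm_le (p + q)
    nlinarith [norm_nonneg p, norm_nonneg (p + q)]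
  refine IsSeqClosed.isClosed ?_
  intro wn w hwn hlim
  choose pf hpf qf hqf hsum using hwn
  have hcw : CauchySeq wn := hlim.cauchySeq
  have hpc : CauchySeq pf := by
    rw [Metric.cauchySeq_iff] at hcw ⊢
    intro ε hε
    obtain ⟨N, hN⟩ := hcw (ε / 3) (by linarith)
    refine ⟨N, fun m hm n hn => ?_⟩
    have hd := key _ (hSsub _ _ (hpf m) (hpf n)) _ (hTsub _ _ (hqf m) (hqf n))
    have heq : (pf m - pf n) + (qf m - qf n) = wn m - wn n := by
      rw [hsum m, hsum n]; abel
    rw [heq] at hd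
    have h3 := hN m hm n hn
    rw [dist_eq_norm] at h3 ⊢
    calc ‖pf m - pf n‖ ≤ 2 * ‖wn m - wn n‖ := hd
      _ < 2 * (ε / 3) := by linarith
      _ < ε := by linarith
  obtain ⟨p, hplim⟩ := cauchySeq_tendsto_of_complete hpc
  have hpS : p ∈ S := hS.mem_of_tendsto hplim (Filter.Eventually.of_forall hpf)
  have hqlim : Filter.Tendsto qf Filter.atTop (nhds (w - p)) := by
    have hqe : qf = fun n => wn n - pf n := funext fun n => by rw [hsum n]; abel
    rw [hqe]
    exact hlim.sub hplim
  have hqT : w - p ∈ T := hT.mem_of_tendsto hqlim (Filter.Eventually.of_forall hqf)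
  exact ⟨p, hpS, w - p, hqT, by abel⟩

end ProdBasic


section AdjQuad
open WithCStarModule
variable {E F G H : Type*}
  [NormedAddCommGroup E] [NormedSpace ℂ E] [SMul Aᵐᵒᵖ E] [RightCStarModule A E] [CompleteSpace E]
  [NormedAddCommGroup F] [NormedSpace ℂ F] [SMul Aᵐᵒᵖ F] [RightCStarModule A F] [CompleteSpace F]
  [NormedAddCommGroup G] [NormedSpace ℂ G] [SMul Aᵐᵒᵖ G] [RightCStarModule A G] [CompleteSpace G]
  [NormedAddCommGroup H] [NormedSpace ℂ H] [SMul Aᵐᵒᵖ H] [RightCStarModule A H] [CompleteSpace H]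

/-- The bi-Lipschitz linear equivalence between the C*-module product synonym and the plain
product. -/
noncomputable def prodCLE : RCS.PMod A (E × F) ≃L[ℂ] E × F :=
  RCS.pmodCLE

lemma prodCLE_inner (x y : RCS.PMod A (E × F)) :
    (inner A x y : A) = ⟪prodCLE x, prodCLE y⟫ := rfl

variable (a : CStarReg.Adjointable A G E) (b : CStarReg.Adjointable A G F)
  (astar : CStarReg.Adjointable A H F) (bstar : CStarReg.Adjointable A H E)

/-- The "big matrix" operator `(x, h) ↦ (a x + b⋆ h, b x - a⋆ h)`. -/
noncomputable def opN : (G × H) →L[ℂ] (E × F) :=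
  (((adjCLM a.adjoint_eq).comp (ContinuousLinearMap.fst ℂ G H) +
    (adjCLM bstar.adjoint_eq).comp (ContinuousLinearMap.snd ℂ G H))).prod
   (((adjCLM b.adjoint_eq).comp (ContinuousLinearMap.fst ℂ G H)) -
    ((adjCLM astar.adjoint_eq).comp (ContinuousLinearMap.snd ℂ G H)))

lemma opN_apply (u : G × H) :
    opN a b astar bstar u
      = (a.toFun u.1 + bstar.toFun u.2, b.toFun u.1 - astar.toFun u.2) := rfl

/-- The adjoint of `opN`. -/
noncomputable def opNs : (E × F) →L[ℂ] (G × H) :=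
  (((adjCLM (adj_flip a.adjoint_eq)).comp (ContinuousLinearMap.fst ℂ E F) +
    (adjCLM (adj_flip b.adjoint_eq)).comp (ContinuousLinearMap.snd ℂ E F))).prod
   (((adjCLM (adj_flip bstar.adjoint_eq)).comp (ContinuousLinearMap.fst ℂ E F)) -
    ((adjCLM (adj_flip astar.adjoint_eq)).comp (ContinuousLinearMap.snd ℂ E F)))

lemma opNs_apply (w : E × F) :
    opNs a b astar bstar w
      = (a.adjFun w.1 + b.adjFun w.2, bstar.adjFun w.1 - astar.adjFun w.2) := rfl

lemma opN_adj (u : G × H) (w : E × F) :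
    ⟪opN a b astar bstar u, w⟫ = ⟪u, opNs a b astar bstar w⟫ := by
  rw [opN_apply, opNs_apply, pInner_def, pInner_def]
  show ⟪a.toFun u.1 + bstar.toFun u.2, w.1⟫ + ⟪b.toFun u.1 - astar.toFun u.2, w.2⟫
    = ⟪u.1, a.adjFun w.1 + b.adjFun w.2⟫ + ⟪u.2, bstar.adjFun w.1 - astar.adjFun w.2⟫
  rw [RCS.inner_add_left, RCS.inner_sub_left,
    RCS.inner_add_right, RCS.inner_sub_right,
    a.adjoint_eq, b.adjoint_eq, bstar.adjoint_eq, astar.adjoint_eq]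
  abel

lemma opN_adj' (w : E × F) (u : G × H) :
    ⟪opNs a b astar bstar w, u⟫ = ⟪w, opN a b astar bstar u⟫ := by
  have h := congrArg star (opN_adj a b astar bstar u w)
  rw [pInner_star, pInner_star] at h
  exact h.symm

lemma opNs_ker (hka : ∀ z : E, a.adjFun z = 0 → z = 0)
    (hkas : ∀ z : F, astar.adjFun z = 0 → z = 0)
    (hrel2 : ∀ y : F, a.toFun (b.adjFun y) = bstar.toFun (astar.adjFun y))
    {w : E × F} (h : opNs a b astar bstar w = 0) : w = 0 := by
  have h0 : opN a b astar bstar (opNs a b astar bstar w) = 0 := by rw [h]; exact map_zero _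
  rw [opNs_apply, opN_apply] at h0
  rw [Prod.ext_iff] at h0
  obtain ⟨h1, h2⟩ := h0
  simp only [Prod.fst_zero, Prod.snd_zero] at h1 h2
  -- first component
  rw [adj_map_add a.adjoint_eq, adj_map_sub bstar.adjoint_eq, hrel2 w.2] at h1
  have h1' : a.toFun (a.adjFun w.1) + bstar.toFun (bstar.adjFun w.1) = 0 := by
    have : a.toFun (a.adjFun w.1) + bstar.toFun (astar.adjFun w.2)
        + (bstar.toFun (bstar.adjFun w.1) - bstar.toFun (astar.adjFun w.2))
        = a.toFun (a.adjFun w.1) + bstar.toFun (bstar.adjFun w.1) := by abel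
    rw [← this, h1]
  have e1 : (⟪a.adjFun w.1, a.adjFun w.1⟫ : A) + ⟪bstar.adjFun w.1, bstar.adjFun w.1⟫ = 0 := by
    have f1 : (⟪w.1, a.toFun (a.adjFun w.1)⟫ : A) = ⟪a.adjFun w.1, a.adjFun w.1⟫ := by
      have hh := congrArg star (a.adjoint_eq (a.adjFun w.1) w.1)
      rw [RCS.star_inner, RCS.star_inner] at hh
      exact hh
    have f2 : (⟪w.1, bstar.toFun (bstar.adjFun w.1)⟫ : A)
        = ⟪bstar.adjFun w.1, bstar.adjFun w.1⟫ := by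
      have hh := congrArg star (bstar.adjoint_eq (bstar.adjFun w.1) w.1)
      rw [RCS.star_inner, RCS.star_inner] at hh
      exact hh
    rw [← f1, ← f2, ← RCS.inner_add_right, h1', RCS.inner_zero_right]
  have ha1 : a.adjFun w.1 = 0 := RCS.inner_self.mp
    (pos_eq_zero_of_add' RCS.inner_self_nonneg RCS.inner_self_nonneg e1)
  have hw1 : w.1 = 0 := hka _ ha1
  -- second component
  rw [hw1] at h2
  rw [adj_map_zero (adj_flip a.adjoint_eq), adj_map_zero (adj_flip bstar.adjoint_eq),
    zero_add, zero_sub, adj_map_neg astar.adjoint_eq] at h2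
  have h2' : b.toFun (b.adjFun w.2) + astar.toFun (astar.adjFun w.2) = 0 := by
    have : b.toFun (b.adjFun w.2) - -astar.toFun (astar.adjFun w.2)
        = b.toFun (b.adjFun w.2) + astar.toFun (astar.adjFun w.2) := by abel
    rw [← this, h2]
  have e2 : (⟪b.adjFun w.2, b.adjFun w.2⟫ : A) + ⟪astar.adjFun w.2, astar.adjFun w.2⟫ = 0 := by
    have f1 : (⟪w.2, b.toFun (b.adjFun w.2)⟫ : A) = ⟪b.adjFun w.2, b.adjFun w.2⟫ := by
      have hh := congrArg star (b.adjoint_eq (b.adjFun w.2) w.2)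
      rw [RCS.star_inner, RCS.star_inner] at hh
      exact hh
    have f2 : (⟪w.2, astar.toFun (astar.adjFun w.2)⟫ : A)
        = ⟪astar.adjFun w.2, astar.adjFun w.2⟫ := by
      have hh := congrArg star (astar.adjoint_eq (astar.adjFun w.2) w.2)
      rw [RCS.star_inner, RCS.star_inner] at hh
      exact hh
    rw [← f1, ← f2, ← RCS.inner_add_right, h2', RCS.inner_zero_right]
  have ha2 : astar.adjFun w.2 = 0 := RCS.inner_self.mp
    (pos_eq_zero_of_add' RCS.inner_self_nonneg RCS.inner_self_nonneg
      (by rw [add_comm] at e2; exact e2))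
  have hw2 : w.2 = 0 := hkas _ ha2
  exact Prod.ext hw1 hw2

end AdjQuad


section Master
open WithCStarModule
variable {E F G H : Type*}
  [NormedAddCommGroup E] [NormedSpace ℂ E] [SMul Aᵐᵒᵖ E] [RightCStarModule A E] [CompleteSpace E]
  [NormedAddCommGroup F] [NormedSpace ℂ F] [SMul Aᵐᵒᵖ F] [RightCStarModule A F] [CompleteSpace F]
  [NormedAddCommGroup G] [NormedSpace ℂ G] [SMul Aᵐᵒᵖ G] [RightCStarModule A G] [CompleteSpace G]
  [NormedAddCommGroup H] [NormedSpace ℂ H] [SMul Aᵐᵒᵖ H] [RightCStarModule A H] [CompleteSpace H]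

theorem master_decomp (a : CStarReg.Adjointable A G E) (b : CStarReg.Adjointable A G F)
    (astar : CStarReg.Adjointable A H F) (bstar : CStarReg.Adjointable A H E)
    (hrel : ∀ y : H, b.adjFun (astar.toFun y) = a.adjFun (bstar.toFun y))
    (hka : ∀ z : E, a.adjFun z = 0 → z = 0)
    (hkas : ∀ z : F, astar.adjFun z = 0 → z = 0)
    (hrel2 : ∀ y : F, a.toFun (b.adjFun y) = bstar.toFun (astar.adjFun y))
    (hcl1 : IsClosed {p : E × F | ∃ x : G, p = (a.toFun x, b.toFun x)})
    (hcl2 : IsClosed {p : F × E | ∃ y : H, p = (astar.toFun y, bstar.toFun y)}) :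
    ∀ p : E × F, ∃ x : G, ∃ h : H,
      p = (a.toFun x + bstar.toFun h, b.toFun x - astar.toFun h) := by
  classical
  set S1 : Set (E × F) := {p : E × F | ∃ x : G, p = (a.toFun x, b.toFun x)} with hS1def
  set S2 : Set (E × F) := {p : E × F | ∃ h : H, p = (bstar.toFun h, -astar.toFun h)} with hS2def
  -- closedness of S2
  have hS2cl : IsClosed S2 := by
    have heq : S2 = (fun p : E × F => ((-p.2, p.1) : F × E)) ⁻¹'
        {p : F × E | ∃ y : H, p = (astar.toFun y, bstar.toFun y)} := by
      ext p
      constructor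
      · rintro ⟨h, rfl⟩
        exact ⟨h, by simp⟩
      · rintro ⟨h, hp⟩
        rw [Prod.ext_iff] at hp
        refine ⟨h, ?_⟩
        have h1 : -p.2 = astar.toFun h := hp.1
        have h2 : p.1 = bstar.toFun h := hp.2
        have h3 : p.2 = -astar.toFun h := by rw [← h1]; abel
        exact Prod.ext h2 h3
    rw [heq]
    exact hcl2.preimage (by fun_prop)
  -- subgroup properties
  have hS1sub : ∀ p q : E × F, p ∈ S1 → q ∈ S1 → p - q ∈ S1 := by
    rintro _ _ ⟨x, rfl⟩ ⟨y, rfl⟩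
    exact ⟨x - y, by rw [adj_map_sub a.adjoint_eq, adj_map_sub b.adjoint_eq]; rfl⟩
  have hS2sub : ∀ p q : E × F, p ∈ S2 → q ∈ S2 → p - q ∈ S2 := by
    rintro _ _ ⟨x, rfl⟩ ⟨y, rfl⟩
    refine ⟨x - y, ?_⟩
    rw [adj_map_sub bstar.adjoint_eq, adj_map_sub astar.adjoint_eq]
    have : -(astar.toFun x - astar.toFun y) = -astar.toFun x - -astar.toFun y := by abel
    rw [this]
    rfl
  -- orthogonality
  have horthkey : ∀ (x : G) (h : H), (⟪b.toFun x, astar.toFun h⟫ : A) = ⟪a.toFun x, bstar.toFun h⟫ := by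
    intro x h
    rw [b.adjoint_eq, hrel h, ← a.adjoint_eq]
  have horth : ∀ p ∈ S1, ∀ q ∈ S2, (⟪p, q⟫ : A) = 0 := by
    rintro _ ⟨x, rfl⟩ _ ⟨h, rfl⟩
    show (⟪a.toFun x, bstar.toFun h⟫ : A) + ⟪b.toFun x, -astar.toFun h⟫ = 0
    rw [RCS.inner_neg_right, ← horthkey x h]
    abel
  -- the closed sum
  have hsumcl : IsClosed {w : E × F | ∃ p ∈ S1, ∃ q ∈ S2, w = p + q} :=
    closed_orth_sum hcl1 hS2cl hS1sub hS2sub horth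
  have hrange : ∀ w : E × F,
      (w ∈ {w : E × F | ∃ p ∈ S1, ∃ q ∈ S2, w = p + q}) ↔ ∃ u : G × H, opN a b astar bstar u = w := by
    intro w
    constructor
    · rintro ⟨_, ⟨x, rfl⟩, _, ⟨h, rfl⟩, rfl⟩
      refine ⟨(x, h), ?_⟩
      rw [opN_apply]
      show _ = (a.toFun x + bstar.toFun h, b.toFun x + -astar.toFun h)
      rw [sub_eq_add_neg]
    · rintro ⟨u, rfl⟩
      refine ⟨(a.toFun u.1, b.toFun u.1), ⟨u.1, rfl⟩, (bstar.toFun u.2, -astar.toFun u.2),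
        ⟨u.2, rfl⟩, ?_⟩
      rw [opN_apply]
      show (_, _) = (a.toFun u.1 + bstar.toFun u.2, b.toFun u.1 + -astar.toFun u.2)
      rw [sub_eq_add_neg]
  -- move to the synonym types
  set eP : RCS.PMod A (E × F) ≃L[ℂ] E × F := prodCLE with hePdef
  set eQ : RCS.PMod A (G × H) ≃L[ℂ] G × H := prodCLE with heQdef
  set Mclm : RCS.PMod A (G × H) →L[ℂ] RCS.PMod A (E × F) :=
    (eP.symm.toContinuousLinearMap.comp ((opN a b astar bstar).comp
      eQ.toContinuousLinearMap)) with hMdef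
  have hMapp : ∀ u : RCS.PMod A (G × H), eP (Mclm u) = opN a b astar bstar (eQ u) := by
    intro u
    rw [hMdef]
    simp only [ContinuousLinearMap.comp_apply, ContinuousLinearEquiv.coe_coe]
    exact eP.apply_symm_apply _
  set Mstar : RCS.PMod A (E × F) →L[ℂ] RCS.PMod A (G × H) :=
    (eQ.symm.toContinuousLinearMap.comp ((opNs a b astar bstar).comp
      eP.toContinuousLinearMap)) with hMsdef
  have hMsapp : ∀ w : RCS.PMod A (E × F), eQ (Mstar w) = opNs a b astar bstar (eP w) := by
    intro w
    rw [hMsdef]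
    simp only [ContinuousLinearMap.comp_apply, ContinuousLinearEquiv.coe_coe]
    exact eQ.apply_symm_apply _
  have hQinner : ∀ x y : RCS.PMod A (G × H), (inner A x y : A) = ⟪eQ x, eQ y⟫ := fun x y => rfl
  have hPinner : ∀ x y : RCS.PMod A (E × F), (inner A x y : A) = ⟪eP x, eP y⟫ := fun x y => rfl
  have hMadj : ∀ (u : RCS.PMod A (G × H)) (w : RCS.PMod A (E × F)),
      (inner A (Mclm u) w : A) = inner A u (Mstar w) := by
    intro u w
    rw [hPinner, hQinner, hMapp, hMsapp, opN_adj]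
  set Dp : RCS.PMod A (E × F) →L[ℂ] RCS.PMod A (E × F) := Mclm.comp Mstar with hDdef
  have hDapp : ∀ w, Dp w = Mclm (Mstar w) := fun w => rfl
  have hDadj : ∀ w w' : RCS.PMod A (E × F), (inner A (Dp w) w' : A) = inner A w (Dp w') := by
    intro w w'
    rw [hDapp, hDapp, hMadj]
    have h1 : (inner A w (Mclm (Mstar w')) : A) = inner A (Mstar w) (Mstar w') := by
      have h2 := congrArg star (hMadj (Mstar w') w)
      rw [RCS.star_inner, RCS.star_inner] at h2
      exact h2
    rw [h1]
  -- the range submodule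
  set Rsub : Submodule ℂ (RCS.PMod A (E × F)) := LinearMap.range Mclm.toLinearMap with hRdef
  have hRmemiff : ∀ w : RCS.PMod A (E × F), w ∈ Rsub ↔ ∃ u, Mclm u = w := by
    intro w; exact LinearMap.mem_range
  have hRclosed : IsClosed (Rsub : Set (RCS.PMod A (E × F))) := by
    have heq : (Rsub : Set (RCS.PMod A (E × F)))
        = (eP : RCS.PMod A (E × F) → E × F) ⁻¹' {w : E × F | ∃ p ∈ S1, ∃ q ∈ S2, w = p + q} := by
      ext w
      rw [Set.mem_preimage, hrange]
      constructor
      · rintro hw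
        obtain ⟨u, hu⟩ := (hRmemiff w).mp hw
        exact ⟨eQ u, by rw [← hu, hMapp]⟩
      · rintro ⟨u, hu⟩
        refine (hRmemiff w).mpr ⟨eQ.symm u, ?_⟩
        apply eP.injective
        rw [hMapp, eQ.apply_symm_apply, hu]
    rw [heq]
    exact hsumcl.preimage eP.continuous
  letI : CompleteSpace ↥Rsub := hRclosed.completeSpace_coe
  -- open mapping
  set Mres : RCS.PMod A (G × H) →L[ℂ] ↥Rsub :=
    Mclm.codRestrict Rsub (fun u => LinearMap.mem_range_self _ u) with hMresdef
  have hMres_surj : Function.Surjective Mres := by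
    rintro ⟨w, hw⟩
    obtain ⟨u, hu⟩ := (hRmemiff w).mp hw
    exact ⟨u, Subtype.ext hu⟩
  obtain ⟨C, hC0, hCC⟩ := Mres.exists_preimage_norm_le hMres_surj
  -- C*-module structure on the range
  have hsmulA : ∀ (m : Aᵐᵒᵖ) (w : RCS.PMod A (E × F)), w ∈ Rsub → m • w ∈ Rsub := by
    rintro m w hw
    obtain ⟨u, rfl⟩ := (hRmemiff w).mp hw
    refine (hRmemiff _).mpr ⟨m • u, ?_⟩
    apply eP.injective
    rw [hMapp]
    have h1 : eQ (m • u) = m • eQ u := rfl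
    have h2 : eP (m • Mclm u) = m • eP (Mclm u) := rfl
    rw [h1, h2, hMapp]
    -- opN (m • v) = m • opN v
    set v := eQ u
    rw [opN_apply, opN_apply]
    have hv1 : (m • v).1 = m • v.1 := rfl
    have hv2 : (m • v).2 = m • v.2 := rfl
    rw [hv1, hv2, adj_map_opSmul a.adjoint_eq, adj_map_opSmul b.adjoint_eq,
      adj_map_opSmul astar.adjoint_eq, adj_map_opSmul bstar.adjoint_eq]
    have hsm1 : m • a.toFun v.1 + m • bstar.toFun v.2 = m • (a.toFun v.1 + bstar.toFun v.2) :=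
      (opSmul_add m _ _).symm
    have hsm2 : m • b.toFun v.1 - m • astar.toFun v.2 = m • (b.toFun v.1 - astar.toFun v.2) := by
      have hx := opSmul_add m (b.toFun v.1 - astar.toFun v.2) (astar.toFun v.2)
      rw [sub_add_cancel] at hx
      rw [hx]
      abel
    rw [hsm1, hsm2]
    rfl
  letI instInnerR : Inner A ↥Rsub := ⟨fun x y => (inner A (x : RCS.PMod A (E × F)) (y : RCS.PMod A (E × F)) : A)⟩
  letI instSMulR : SMul Aᵐᵒᵖ ↥Rsub := ⟨fun m x => ⟨m • (x : RCS.PMod A (E × F)), hsmulA m _ x.2⟩⟩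
  letI instCSMR : RightCStarModule A ↥Rsub :=
    { toInner := instInnerR
      inner_add_right := fun {x y z} => by
        show (inner A (x : RCS.PMod A (E × F)) ((y : RCS.PMod A (E × F)) + z) : A) = _
        exact RCS.inner_add_right
      inner_self_nonneg := fun {x} => RCS.inner_self_nonneg (x := (x : RCS.PMod A (E × F)))
      inner_self := fun {x} => by
        constructor
        · intro hx
          have hx' : (inner A (x : RCS.PMod A (E × F)) (x : RCS.PMod A (E × F)) : A) = 0 := hx
          exact Subtype.ext (RCS.inner_self.mp hx')
        · rintro rfl
          show (inner A ((0 : ↥Rsub) : RCS.PMod A (E × F)) (((0 : ↥Rsub) : ↥Rsub) : RCS.PMod A (E × F)) : A) = 0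
          rw [ZeroMemClass.coe_zero]
          exact RCS.inner_self.mpr rfl
      inner_op_smul_right := fun {m x y} => by
        show (inner A (x : RCS.PMod A (E × F)) ((MulOpposite.op m) • (y : RCS.PMod A (E × F))) : A) = _
        exact RCS.inner_op_smul_right
      inner_smul_right_complex := fun {z x y} => by
        show (inner A (x : RCS.PMod A (E × F)) (z • (y : RCS.PMod A (E × F))) : A) = _
        exact RCS.inner_smul_right_complex
      star_inner := fun x y => RCS.star_inner (x : RCS.PMod A (E × F)) (y : RCS.PMod A (E × F))
      norm_eq_sqrt_norm_inner_self := fun x =>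
        RCS.norm_eq_sqrt_norm_inner_self (x : RCS.PMod A (E × F)) }
  -- the restricted operator
  have hDmem : ∀ w : RCS.PMod A (E × F), Dp w ∈ Rsub := fun w =>
    (hRmemiff _).mpr ⟨Mstar w, rfl⟩
  set sR : ↥Rsub →L[ℂ] ↥Rsub :=
    { toFun := fun x => (⟨Dp (x : RCS.PMod A (E × F)), hDmem _⟩ : ↥Rsub)
      map_add' := fun x y => Subtype.ext (by
        show Dp ((x : RCS.PMod A (E × F)) + y) = Dp x + Dp y
        exact map_add Dp _ _)
      map_smul' := fun c x => Subtype.ext (by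
        show Dp (c • (x : RCS.PMod A (E × F))) = c • Dp x
        exact map_smul Dp c _)
      cont := (Dp.continuous.comp continuous_subtype_val).subtype_mk _ } with hsRdef
  have hsRapp : ∀ r : ↥Rsub, (sR r : RCS.PMod A (E × F)) = Dp (r : RCS.PMod A (E × F)) := fun r => rfl
  have hsRadj : ∀ x y : ↥Rsub, (inner A (sR x) y : A) = inner A x (sR y) := by
    intro x y
    show (inner A (Dp (x : RCS.PMod A (E × F))) (y : RCS.PMod A (E × F)) : A) = _
    exact hDadj _ _
  -- bounded below
  have hlowR : ∀ r : ↥Rsub, ((C ^ 2)⁻¹ : ℝ) * ‖r‖ ≤ ‖sR r‖ := by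
    intro r
    obtain ⟨u, hu, hun⟩ := hCC r
    have hnr : ‖r‖ = ‖(r : RCS.PMod A (E × F))‖ := rfl
    have h1 : ‖r‖ ^ 2 ≤ C * ‖r‖ * ‖Mstar (r : RCS.PMod A (E × F))‖ := by
      have e1 : ‖r‖ ^ 2 = ‖(inner A (r : RCS.PMod A (E × F)) (r : RCS.PMod A (E × F)) : A)‖ := by
        rw [hnr, RCS.norm_sq_eq]
      have e2 : (inner A (r : RCS.PMod A (E × F)) (r : RCS.PMod A (E × F)) : A)
          = inner A (Mclm u) (r : RCS.PMod A (E × F)) := by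
        have : (Mres u : RCS.PMod A (E × F)) = Mclm u := rfl
        rw [← this, hu]
      have e3 := hMadj u (r : RCS.PMod A (E × F))
      have e4 : ‖(inner A u (Mstar (r : RCS.PMod A (E × F))) : A)‖
          ≤ ‖u‖ * ‖Mstar (r : RCS.PMod A (E × F))‖ := RCS.norm_inner_le _
      rw [e1, e2, e3]
      calc ‖(inner A u (Mstar (r : RCS.PMod A (E × F))) : A)‖
          ≤ ‖u‖ * ‖Mstar (r : RCS.PMod A (E × F))‖ := e4
        _ ≤ (C * ‖r‖) * ‖Mstar (r : RCS.PMod A (E × F))‖ := by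
            apply mul_le_mul_of_nonneg_right hun (norm_nonneg _)
    have h2 : ‖Mstar (r : RCS.PMod A (E × F))‖ ^ 2 ≤ ‖r‖ * ‖Dp (r : RCS.PMod A (E × F))‖ := by
      have e1 : ‖Mstar (r : RCS.PMod A (E × F))‖ ^ 2
          = ‖(inner A (Mstar (r : RCS.PMod A (E × F))) (Mstar (r : RCS.PMod A (E × F))) : A)‖ :=
        RCS.norm_sq_eq
      have e2 : (inner A (Mstar (r : RCS.PMod A (E × F))) (Mstar (r : RCS.PMod A (E × F))) : A)
          = inner A (r : RCS.PMod A (E × F)) (Dp (r : RCS.PMod A (E × F))) := by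
        have h3 := congrArg star (hMadj (Mstar (r : RCS.PMod A (E × F))) (r : RCS.PMod A (E × F)))
        rw [RCS.star_inner, RCS.star_inner] at h3
        rw [← h3, hDapp]
      rw [e1, e2]
      calc ‖(inner A (r : RCS.PMod A (E × F)) (Dp (r : RCS.PMod A (E × F))) : A)‖
          ≤ ‖(r : RCS.PMod A (E × F))‖ * ‖Dp (r : RCS.PMod A (E × F))‖ := RCS.norm_inner_le _
        _ = ‖r‖ * ‖Dp (r : RCS.PMod A (E × F))‖ := by rw [hnr]
    have hns : ‖sR r‖ = ‖Dp (r : RCS.PMod A (E × F))‖ := rfl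
    rw [hns]
    rcases eq_or_lt_of_le (norm_nonneg r) with hr0 | hr0
    · rw [← hr0, mul_zero]
      exact norm_nonneg _
    · set X := ‖Mstar (r : RCS.PMod A (E × F))‖ with hX
      set Y := ‖Dp (r : RCS.PMod A (E × F))‖ with hY
      have h1' : ‖r‖ * ‖r‖ ≤ (C * X) * ‖r‖ := by
        rw [pow_two] at h1
        calc ‖r‖ * ‖r‖ ≤ C * ‖r‖ * X := h1
          _ = (C * X) * ‖r‖ := by ring
      have hs1 : ‖r‖ ≤ C * X := le_of_mul_le_mul_right h1' hr0
      have hsq : ‖r‖ ^ 2 ≤ (C * X) ^ 2 := by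
        rw [pow_two, pow_two]
        exact mul_le_mul hs1 hs1 (norm_nonneg r) (le_trans (norm_nonneg r) hs1)
      have hs2 : ‖r‖ ^ 2 ≤ C ^ 2 * (‖r‖ * Y) := by
        calc ‖r‖ ^ 2 ≤ (C * X) ^ 2 := hsq
          _ = C ^ 2 * X ^ 2 := by ring
          _ ≤ C ^ 2 * (‖r‖ * Y) := by
              apply mul_le_mul_of_nonneg_left h2 (by positivity)
      have hs3' : ‖r‖ * ‖r‖ ≤ (C ^ 2 * Y) * ‖r‖ := by
        rw [pow_two] at hs2
        calc ‖r‖ * ‖r‖ ≤ C ^ 2 * (‖r‖ * Y) := hs2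
          _ = (C ^ 2 * Y) * ‖r‖ := by ring
      have hs3 : ‖r‖ ≤ C ^ 2 * Y := le_of_mul_le_mul_right hs3' hr0
      have hC2 : (0:ℝ) < C ^ 2 := by positivity
      rw [inv_mul_le_iff₀ hC2]
      linarith [hs3]
  have hsurj : Function.Surjective sR :=
    surj_of_selfadj_bddBelow sR hsRadj (c := (C ^ 2)⁻¹) (by positivity) hlowR
  -- everything lies in the range
  have hall : ∀ w : RCS.PMod A (E × F), w ∈ Rsub := by
    intro w
    obtain ⟨z, hz⟩ := hsurj ⟨Dp w, hDmem w⟩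
    have hzco : Dp (z : RCS.PMod A (E × F)) = Dp w := by
      have := congrArg (Subtype.val) hz
      exact this
    have horthall : ∀ r : ↥Rsub, (inner A (r : RCS.PMod A (E × F)) (w - (z : RCS.PMod A (E × F))) : A) = 0 := by
      intro r
      obtain ⟨r₀, hr₀⟩ := hsurj r
      have hr₀co : (r : RCS.PMod A (E × F)) = Dp (r₀ : RCS.PMod A (E × F)) := by
        have := congrArg (Subtype.val) hr₀
        exact this.symm
      have e1 : (inner A (r : RCS.PMod A (E × F)) w : A) = inner A (r : RCS.PMod A (E × F)) (z : RCS.PMod A (E × F)) := by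
        calc (inner A (r : RCS.PMod A (E × F)) w : A)
            = inner A (Dp (r₀ : RCS.PMod A (E × F))) w := by rw [← hr₀co]
          _ = inner A (r₀ : RCS.PMod A (E × F)) (Dp w) := hDadj _ _
          _ = inner A (r₀ : RCS.PMod A (E × F)) (Dp (z : RCS.PMod A (E × F))) := by rw [hzco]
          _ = inner A (Dp (r₀ : RCS.PMod A (E × F))) (z : RCS.PMod A (E × F)) := (hDadj _ _).symm
          _ = inner A (r : RCS.PMod A (E × F)) (z : RCS.PMod A (E × F)) := by rw [← hr₀co]
      rw [RCS.inner_sub_right, e1, sub_self]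
    have hMst0 : opNs a b astar bstar (eP (w - (z : RCS.PMod A (E × F)))) = 0 := by
      rw [← hMsapp]
      have hq0 : ∀ v : G × H, (⟪v, eQ (Mstar (w - (z : RCS.PMod A (E × F))))⟫ : A) = 0 := by
        intro v
        have e5 : (⟪v, eQ (Mstar (w - (z : RCS.PMod A (E × F))))⟫ : A)
            = inner A (eQ.symm v) (Mstar (w - (z : RCS.PMod A (E × F)))) := rfl
        rw [e5, ← hMadj (eQ.symm v) (w - (z : RCS.PMod A (E × F)))]
        exact horthall ⟨Mclm (eQ.symm v), (hRmemiff _).mpr ⟨_, rfl⟩⟩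
      have hq1 : eQ (Mstar (w - (z : RCS.PMod A (E × F)))) = 0 := prod_eq_zero_of_forall_inner hq0
      rw [hq1]
    have hwz : eP (w - (z : RCS.PMod A (E × F))) = 0 := opNs_ker a b astar bstar hka hkas hrel2 hMst0
    have hwz2 : w - (z : RCS.PMod A (E × F)) = 0 := by
      apply eP.injective
      rw [hwz, map_zero]
    have hwz3 : w = (z : RCS.PMod A (E × F)) := by
      rw [sub_eq_zero] at hwz2
      exact hwz2
    rw [hwz3]
    exact z.2
  -- conclude
  intro p
  obtain ⟨u, hu⟩ := (hRmemiff (eP.symm p)).mp (hall (eP.symm p))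
  refine ⟨(eQ u).1, (eQ u).2, ?_⟩
  have h1 : eP (Mclm u) = opN a b astar bstar (eQ u) := hMapp u
  rw [hu, eP.apply_symm_apply] at h1
  rw [h1, opN_apply]

end Master

end AuxProof
section Statements

open CStarReg Unbounded

variable {A : Type*} [NonUnitalCStarAlgebra A] [PartialOrder A] [StarOrderedRing A]
variable {E : Type*} [NormedAddCommGroup E] [Module ℂ E] [SMul Aᵐᵒᵖ E] [RightCStarModule A E]
  [CompleteSpace E]
variable {F : Type*} [NormedAddCommGroup F] [Module ℂ F] [SMul Aᵐᵒᵖ F] [RightCStarModule A F]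
  [CompleteSpace F]
variable {G : Type*} [NormedAddCommGroup G] [Module ℂ G] [SMul Aᵐᵒᵖ G] [RightCStarModule A G]
  [CompleteSpace G]
variable {H : Type*} [NormedAddCommGroup H] [Module ℂ H] [SMul Aᵐᵒᵖ H] [RightCStarModule A H]
  [CompleteSpace H]

/-- Admissible pairs of quotients of adjointable operators: given
`a ∈ Adj(G,E)`, `b ∈ Adj(G,F)`, `a_* ∈ Adj(H,F)`, `b_* ∈ Adj(H,E)` with `b*a_* = a*b_*`
and `Null(a*) = Null(a_**) = {0}`, the quotient operators `t = b a⁻¹` and `t' = b_* a_*⁻¹`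
are well-defined, essentially defined, orthogonally closable, with `(t')** ⊆ t*` and
`t** ⊆ (t')*`; if moreover `t`, `t'` are closed and `ab* = b_* a_**`, then `t* = t'` and
`t` is graph regular. -/
theorem admissible_pair_graphRegular (a : Adjointable A G E) (b : Adjointable A G F)
    (astar : Adjointable A H F) (bstar : Adjointable A H E)
    (hrel : ∀ y : H, b.adjFun (astar.toFun y) = a.adjFun (bstar.toFun y))
    (hka : ∀ z : E, a.adjFun z = 0 → z = 0)
    (hkas : ∀ z : F, astar.adjFun z = 0 → z = 0)
    (gt : Set (E × F)) (hgt : gt = {p : E × F | ∃ x : G, p = (a.toFun x, b.toFun x)})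
    (gt' : Set (F × E))
    (hgt' : gt' = {p : F × E | ∃ y : H, p = (astar.toFun y, bstar.toFun y)}) :
    (∀ x : G, a.toFun x = 0 → b.toFun x = 0) ∧
    (∀ y : H, astar.toFun y = 0 → bstar.toFun y = 0) ∧
    (∃ u : CStarReg.Unbounded A E F, u.graph = gt) ∧
    (∃ u' : CStarReg.Unbounded A F E, u'.graph = gt') ∧
    IsEssential A (Prod.fst '' gt) ∧ IsEssential A (Prod.fst '' gt') ∧
    (∃ s : CStarReg.Unbounded A E F, s.graph = ortho A (ortho A gt)) ∧
    (∃ s' : CStarReg.Unbounded A F E, s'.graph = ortho A (ortho A gt')) ∧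
    adjSet A (adjSet A gt') ⊆ adjSet A gt ∧
    adjSet A (adjSet A gt) ⊆ adjSet A gt' ∧
    (IsClosed gt → IsClosed gt' →
      (∀ y : F, a.toFun (b.adjFun y) = bstar.toFun (astar.adjFun y)) →
      adjSet A gt = gt' ∧
      ∀ u : CStarReg.Unbounded A E F, u.graph = gt → u.GraphRegular) := by
  classical
  letI : NormedSpace ℂ E :=
    { norm_smul_le := fun c x => le_of_eq ((RCS.normedSpaceCore A (E := E)).norm_smul c x) }
  letI : NormedSpace ℂ F :=
    { norm_smul_le := fun c x => le_of_eq ((RCS.normedSpaceCore A (E := F)).norm_smul c x) }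
  letI : NormedSpace ℂ G :=
    { norm_smul_le := fun c x => le_of_eq ((RCS.normedSpaceCore A (E := G)).norm_smul c x) }
  letI : NormedSpace ℂ H :=
    { norm_smul_le := fun c x => le_of_eq ((RCS.normedSpaceCore A (E := H)).norm_smul c x) }
  subst hgt
  subst hgt'
  set gt : Set (E × F) := {p : E × F | ∃ x : G, p = (a.toFun x, b.toFun x)} with hgtdef
  set gt' : Set (F × E) := {p : F × E | ∃ y : H, p = (astar.toFun y, bstar.toFun y)} with hgtdef'
  -- the key inner A product identity
  have hkey : ∀ (x : G) (y : H),
      (inner A (b.toFun x) (astar.toFun y) : A) = inner A (a.toFun x) (bstar.toFun y) := by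
    intro x y
    rw [b.adjoint_eq, hrel y, ← a.adjoint_eq]
  -- Conjunct 1
  have hb0 : ∀ x : G, a.toFun x = 0 → b.toFun x = 0 := by
    intro x hx
    have h2 : astar.adjFun (b.toFun x) = 0 := by
      have h1 : (inner A (astar.adjFun (b.toFun x)) (astar.adjFun (b.toFun x)) : A) = 0 := by
        rw [← astar.adjoint_eq]
        have h3 : (inner A (b.toFun x) (astar.toFun (astar.adjFun (b.toFun x))) : A) = 0 := by
          rw [hkey, hx, RCS.inner_zero_left]
        have h4 := congrArg star h3
        rw [RCS.star_inner, star_zero] at h4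
        exact h4
      exact RCS.inner_self.mp h1
    exact hkas _ h2
  -- Conjunct 2
  have hb0' : ∀ y : H, astar.toFun y = 0 → bstar.toFun y = 0 := by
    intro y hy
    have h2 : a.adjFun (bstar.toFun y) = 0 := by
      have h1 : (inner A (a.adjFun (bstar.toFun y)) (a.adjFun (bstar.toFun y)) : A) = 0 := by
        rw [← a.adjoint_eq, ← hkey, hy, RCS.inner_zero_right]
      exact RCS.inner_self.mp h1
    exact hka _ h2
  -- Conjunct 3 : Unbounded structure on gt
  have hugt : ∃ u : CStarReg.Unbounded A E F, u.graph = gt := by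
    refine ⟨⟨gt, ⟨0, ?_⟩, ?_, ?_, ?_, ?_⟩, rfl⟩
    · rw [adj_map_zero a.adjoint_eq, adj_map_zero b.adjoint_eq]
    · rintro _ _ ⟨x, rfl⟩ ⟨y, rfl⟩
      exact ⟨x + y, by rw [adj_map_add a.adjoint_eq, adj_map_add b.adjoint_eq]; rfl⟩
    · rintro c _ ⟨x, rfl⟩
      exact ⟨c • x, by rw [adj_map_smul a.adjoint_eq, adj_map_smul b.adjoint_eq]; rfl⟩
    · rintro m _ ⟨x, rfl⟩
      exact ⟨x <• m, by
        rw [adj_map_opSmul a.adjoint_eq, adj_map_opSmul b.adjoint_eq]⟩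
    · rintro f ⟨x, hx⟩
      rw [Prod.ext_iff] at hx
      have hax : a.toFun x = 0 := hx.1.symm
      have hbx : f = b.toFun x := hx.2
      rw [hbx]
      exact hb0 x hax
  have hugt' : ∃ u' : CStarReg.Unbounded A F E, u'.graph = gt' := by
    refine ⟨⟨gt', ⟨0, ?_⟩, ?_, ?_, ?_, ?_⟩, rfl⟩
    · rw [adj_map_zero astar.adjoint_eq, adj_map_zero bstar.adjoint_eq]
    · rintro _ _ ⟨x, rfl⟩ ⟨y, rfl⟩
      exact ⟨x + y, by rw [adj_map_add astar.adjoint_eq, adj_map_add bstar.adjoint_eq]; rfl⟩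
    · rintro c _ ⟨x, rfl⟩
      exact ⟨c • x, by rw [adj_map_smul astar.adjoint_eq, adj_map_smul bstar.adjoint_eq]; rfl⟩
    · rintro m _ ⟨x, rfl⟩
      exact ⟨x <• m, by
        rw [adj_map_opSmul astar.adjoint_eq, adj_map_opSmul bstar.adjoint_eq]⟩
    · rintro f ⟨x, hx⟩
      rw [Prod.ext_iff] at hx
      have hax : astar.toFun x = 0 := hx.1.symm
      have hbx : f = bstar.toFun x := hx.2
      rw [hbx]
      exact hb0' x hax
  -- Conjunct 5 : essentiality of the domain
  have hess : IsEssential A (Prod.fst '' gt) := by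
    refine Set.eq_singleton_iff_unique_mem.mpr ⟨?_, ?_⟩
    · intro y hy
      exact RCS.inner_zero_left
    · intro z hz
      have h1 : ∀ x : G, (inner A z (a.toFun x) : A) = 0 := by
        intro x
        exact hz (a.toFun x) ⟨(a.toFun x, b.toFun x), ⟨x, rfl⟩, rfl⟩
      have h2 : a.adjFun z = 0 := by
        have h3 : (inner A (a.adjFun z) (a.adjFun z) : A) = 0 := by
          rw [← a.adjoint_eq]
          have h4 := congrArg star (h1 (a.adjFun z))
          rw [RCS.star_inner, star_zero] at h4
          exact h4
        exact RCS.inner_self.mp h3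
      exact hka _ h2
  have hess' : IsEssential A (Prod.fst '' gt') := by
    refine Set.eq_singleton_iff_unique_mem.mpr ⟨?_, ?_⟩
    · intro y hy
      exact RCS.inner_zero_left
    · intro z hz
      have h1 : ∀ y : H, (inner A z (astar.toFun y) : A) = 0 := by
        intro y
        exact hz (astar.toFun y) ⟨(astar.toFun y, bstar.toFun y), ⟨y, rfl⟩, rfl⟩
      have h2 : astar.adjFun z = 0 := by
        have h3 : (inner A (astar.adjFun z) (astar.adjFun z) : A) = 0 := by
          rw [← astar.adjoint_eq]
          have h4 := congrArg star (h1 (astar.adjFun z))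
          rw [RCS.star_inner, star_zero] at h4
          exact h4
        exact RCS.inner_self.mp h3
      exact hkas _ h2
  -- elements of ortho gt coming from gt'
  have hS2orth : ∀ y : H, ((bstar.toFun y, -astar.toFun y) : E × F) ∈ ortho A gt := by
    rintro y _ ⟨x, rfl⟩
    show (inner A (bstar.toFun y) (a.toFun x) : A) + inner A (-astar.toFun y) (b.toFun x) = 0
    rw [RCS.inner_neg_left]
    have h1 := congrArg star (hkey x y)
    rw [RCS.star_inner, RCS.star_inner] at h1
    rw [← h1]
    abel
  have hS2orth' : ∀ x : G, ((b.toFun x, -a.toFun x) : F × E) ∈ ortho A gt' := by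
    rintro x _ ⟨y, rfl⟩
    show (inner A (b.toFun x) (astar.toFun y) : A) + inner A (-a.toFun x) (bstar.toFun y) = 0
    rw [RCS.inner_neg_left, hkey x y]
    abel
  -- Conjunct 7 : orthogonal closability of gt
  have hoc : ∃ s : CStarReg.Unbounded A E F, s.graph = ortho A (ortho A gt) := by
    refine ⟨⟨ortho A (ortho A gt), ?_, ?_, ?_, ?_, ?_⟩, rfl⟩
    · intro y hy
      exact pInner_zero_left y
    · intro p q hp hq y hy
      rw [pInner_add_left, hp y hy, hq y hy, add_zero]
    · intro c p hp y hy
      show (inner A (c • p) y : A) = 0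
      have : (inner A (c • p) y : A) = star c • (inner A p y : A) := by
        rw [pInner_def, pInner_def]
        show (inner A (c • p.1) y.1 : A) + inner A (c • p.2) y.2 = _
        rw [RCS.inner_smul_left_complex, RCS.inner_smul_left_complex, smul_add]
      rw [this, hp y hy, smul_zero]
    · intro m p hp y hy
      show (inner A ((p.1 <• m, p.2 <• m) : E × F) y : A) = 0
      have : (inner A ((p.1 <• m, p.2 <• m) : E × F) y : A) = star m * (inner A p y : A) := by
        rw [pInner_def, pInner_def]
        show (inner A (p.1 <• m) y.1 : A) + inner A (p.2 <• m) y.2 = _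
        rw [RCS.inner_op_smul_left, RCS.inner_op_smul_left, mul_add]
      rw [this, hp y hy, mul_zero]
    · intro f hf
      have h1 : ∀ y : H, (inner A f (astar.toFun y) : A) = 0 := by
        intro y
        have h2 := hf _ (hS2orth y)
        have h3 : (inner A (0 : E) (bstar.toFun y) : A) + inner A f (-astar.toFun y) = 0 := h2
        rw [RCS.inner_zero_left, zero_add, RCS.inner_neg_right] at h3
        exact neg_eq_zero.mp h3
      have h2 : astar.adjFun f = 0 := by
        have h3 : (inner A (astar.adjFun f) (astar.adjFun f) : A) = 0 := by
          rw [← astar.adjoint_eq]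
          have h4 := congrArg star (h1 (astar.adjFun f))
          rw [RCS.star_inner, star_zero] at h4
          exact h4
        exact RCS.inner_self.mp h3
      exact hkas _ h2
  have hoc' : ∃ s' : CStarReg.Unbounded A F E, s'.graph = ortho A (ortho A gt') := by
    refine ⟨⟨ortho A (ortho A gt'), ?_, ?_, ?_, ?_, ?_⟩, rfl⟩
    · intro y hy
      exact pInner_zero_left y
    · intro p q hp hq y hy
      rw [pInner_add_left, hp y hy, hq y hy, add_zero]
    · intro c p hp y hy
      show (inner A (c • p) y : A) = 0
      have : (inner A (c • p) y : A) = star c • (inner A p y : A) := by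
        rw [pInner_def, pInner_def]
        show (inner A (c • p.1) y.1 : A) + inner A (c • p.2) y.2 = _
        rw [RCS.inner_smul_left_complex, RCS.inner_smul_left_complex, smul_add]
      rw [this, hp y hy, smul_zero]
    · intro m p hp y hy
      show (inner A ((p.1 <• m, p.2 <• m) : F × E) y : A) = 0
      have : (inner A ((p.1 <• m, p.2 <• m) : F × E) y : A) = star m * (inner A p y : A) := by
        rw [pInner_def, pInner_def]
        show (inner A (p.1 <• m) y.1 : A) + inner A (p.2 <• m) y.2 = _
        rw [RCS.inner_op_smul_left, RCS.inner_op_smul_left, mul_add]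
      rw [this, hp y hy, mul_zero]
    · intro e he
      have h1 : ∀ x : G, (inner A e (a.toFun x) : A) = 0 := by
        intro x
        have h2 := he _ (hS2orth' x)
        have h3 : (inner A (0 : F) (b.toFun x) : A) + inner A e (-a.toFun x) = 0 := h2
        rw [RCS.inner_zero_left, zero_add, RCS.inner_neg_right] at h3
        exact neg_eq_zero.mp h3
      have h2 : a.adjFun e = 0 := by
        have h3 : (inner A (a.adjFun e) (a.adjFun e) : A) = 0 := by
          rw [← a.adjoint_eq]
          have h4 := congrArg star (h1 (a.adjFun e))
          rw [RCS.star_inner, star_zero] at h4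
          exact h4
        exact RCS.inner_self.mp h3
      exact hka _ h2
  -- mutual adjointness inclusions
  have hsub1 : gt' ⊆ adjSet A gt := by
    rintro _ ⟨y, rfl⟩ _ ⟨x, rfl⟩
    exact hkey x y
  have hsub2 : gt ⊆ adjSet A gt' := by
    rintro _ ⟨x, rfl⟩ _ ⟨y, rfl⟩
    have h1 := congrArg star (hkey x y)
    rw [RCS.star_inner, RCS.star_inner] at h1
    exact h1.symm
  have hanti1 : adjSet A (adjSet A gt') ⊆ adjSet A gt := fun q hq p hp => hq p (hsub2 hp)
  have hanti2 : adjSet A (adjSet A gt) ⊆ adjSet A gt' := fun q hq p hp => hq p (hsub1 hp)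
  refine ⟨hb0, hb0', hugt, hugt', hess, hess', hoc, hoc', ?_, ?_, ?_⟩
  · exact hanti1
  · exact hanti2
  · -- the conditional part
    intro hclgt hclgt' hrel2
    have hdec := master_decomp a b astar bstar hrel hka hkas hrel2 hclgt hclgt'
    -- decomposition into gt + S2
    have hdecomp : ∀ p : E × F, ∃ x : G, ∃ y : H,
        p = (a.toFun x, b.toFun x) + (bstar.toFun y, -astar.toFun y) := by
      intro p
      obtain ⟨x, y, hp⟩ := hdec p
      refine ⟨x, y, ?_⟩
      rw [hp, Prod.mk_add_mk, sub_eq_add_neg]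
    -- ortho gt = S2
    have horthogt : ∀ w : E × F, w ∈ ortho A gt ↔ ∃ y : H, w = (bstar.toFun y, -astar.toFun y) := by
      intro w
      constructor
      · intro hw
        obtain ⟨x, y, hp⟩ := hdecomp w
        have hp1 : ((a.toFun x, b.toFun x) : E × F) ∈ ortho A gt := by
          have hmem : ((bstar.toFun y, -astar.toFun y) : E × F) ∈ ortho A gt := hS2orth y
          intro q hq
          have e1 := hw q hq
          have e2 := hmem q hq
          have e3 : (inner A ((a.toFun x, b.toFun x) : E × F) q : A)
              = inner A w q - inner A ((bstar.toFun y, -astar.toFun y) : E × F) q := by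
            rw [hp, pInner_add_left]
            abel
          rw [e3, e1, e2, sub_zero]
        have hz : (inner A ((a.toFun x, b.toFun x) : E × F) ((a.toFun x, b.toFun x) : E × F) : A) = 0 :=
          hp1 _ ⟨x, rfl⟩
        have hz2 : ((a.toFun x, b.toFun x) : E × F) = 0 := pInner_self_eq_zero hz
        refine ⟨y, ?_⟩
        rw [hp, hz2, zero_add]
      · rintro ⟨y, rfl⟩
        exact hS2orth y
    -- adjSet gt = gt'
    have hadj : adjSet A gt = gt' := by
      apply Set.Subset.antisymm
      · rintro ⟨y, z⟩ hyz
        have hmem : ((z, -y) : E × F) ∈ ortho A gt := by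
          rintro _ ⟨x, rfl⟩
          show (inner A z (a.toFun x) : A) + inner A (-y) (b.toFun x) = 0
          have e1 := hyz (a.toFun x, b.toFun x) ⟨x, rfl⟩
          have e2 := congrArg star e1
          rw [RCS.star_inner, RCS.star_inner] at e2
          rw [RCS.inner_neg_left, ← e2]
          abel
        obtain ⟨h, hh⟩ := (horthogt _).mp hmem
        rw [Prod.ext_iff] at hh
        have h1 : z = bstar.toFun h := hh.1
        have h2 : y = astar.toFun h := by
          have := hh.2
          exact neg_injective this
        exact ⟨h, Prod.ext h2 h1⟩
      · exact hsub1
    refine ⟨hadj, ?_⟩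
    -- graph regularity
    intro u hu
    refine ⟨?_, ?_, ?_⟩
    · show IsEssential A u.dom
      have : u.dom = Prod.fst '' gt := by rw [CStarReg.Unbounded.dom, hu]
      rw [this]
      exact hess
    · show ortho A (ortho A u.graph) = u.graph
      rw [hu]
      apply Set.Subset.antisymm
      · intro w hw
        obtain ⟨x, y, hp⟩ := hdecomp w
        set q : E × F := (bstar.toFun y, -astar.toFun y) with hqdef
        have hq1 : q ∈ ortho A gt := hS2orth y
        have hgtsub : ∀ p ∈ gt, p ∈ ortho A (ortho A gt) := by
          intro p hp' r hr
          have e1 := hr p hp'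
          have e2 := congrArg star e1
          rw [pInner_star, star_zero] at e2
          exact e2
        have hq2 : q ∈ ortho A (ortho A gt) := by
          intro r hr
          have e3 : (inner A q r : A) = inner A w r - inner A ((a.toFun x, b.toFun x) : E × F) r := by
            rw [hp, pInner_add_left]
            abel
          rw [e3, hw r hr, hgtsub _ ⟨x, rfl⟩ r hr, sub_zero]
        have hqq : (inner A q q : A) = 0 := hq2 q hq1
        have hq0 : q = 0 := pInner_self_eq_zero hqq
        rw [hp, hq0, add_zero]
        exact ⟨x, rfl⟩
      · intro p hp' r hr
        have e1 := hr p hp'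
        have e2 := congrArg star e1
        rw [pInner_star, star_zero] at e2
        exact e2
    · show u.graph + ortho A u.graph = Set.univ
      rw [hu]
      apply Set.eq_univ_of_forall
      intro p
      obtain ⟨x, y, hp⟩ := hdecomp p
      rw [Set.mem_add]
      exact ⟨(a.toFun x, b.toFun x), ⟨x, rfl⟩, (bstar.toFun y, -astar.toFun y), hS2orth y, hp.symm⟩


end Statements
end
end
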